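/- arXiv:1812.01449 — 8 statements merged into one kernel-verified Lean document; each statement's English description precedes it below -/
import Mathlib

section
/- If R is a correlation matrix and R' is a rank-one correlation matrix, then the Schur product R ⊙ R' is a correlation matrix with rank(R ⊙ R') = rank(R). -/
open scoped ComplexOrder ComplexInnerProductSpace

/-- A correlation matrix: positive semidefinite with ones on the diagonal. -/
def IsCorrMat {n : ℕ} (P : Matrix (Fin n) (Fin n) ℂ) : Prop :=
  P.PosSemidef ∧ ∀ a, P a a = 1

/-- `P` is `r`-decomposable: a finite Schur (entrywise) product of correlation
matrices each of rank at most `r`. -/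
def IsDecomposable {n : ℕ} (r : ℕ) (P : Matrix (Fin n) (Fin n) ℂ) : Prop :=
  ∃ m : ℕ, 0 < m ∧ ∃ R : Fin m → Matrix (Fin n) (Fin n) ℂ,
    (∀ i, IsCorrMat (R i) ∧ (R i).rank ≤ r) ∧ ∀ a b, P a b = ∏ i, R i a b

open Matrix in
/-- If `R` is a correlation matrix and `R'` a rank-one correlation matrix, then
`R ⊙ R'` is a correlation matrix of the same rank as `R`. -/
theorem stmt2 {n : ℕ} (R R' : Matrix (Fin n) (Fin n) ℂ)
    (hR : IsCorrMat R) (hR' : IsCorrMat R') (hrank : R'.rank = 1) :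
    IsCorrMat (Matrix.hadamard R R') ∧ (Matrix.hadamard R R').rank = R.rank := by
  -- n is positive
  have hn : 0 < n := by
    by_contra h
    have : n = 0 := by omega
    subst this
    have : R'.rank ≤ 0 := by
      simpa using R'.rank_le_card_width
    omega
  haveI : NeZero n := ⟨by omega⟩
  set i0 : Fin n := ⟨0, hn⟩
  -- rank one decomposition of R'
  have hfr : Module.finrank ℂ (LinearMap.range R'.mulVecLin) = 1 := hrank
  obtain ⟨v, hv0, hv⟩ := finrank_eq_one_iff'.mp hfr
  have hcol : ∀ b : Fin n, ∃ t : ℂ, ∀ a, R' a b = t * (v : Fin n → ℂ) a := by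
    intro b
    have hmem : (R'.mulVecLin (Pi.single b 1)) ∈ LinearMap.range R'.mulVecLin :=
      LinearMap.mem_range_self _ _
    obtain ⟨t, ht⟩ := hv ⟨_, hmem⟩
    refine ⟨t, fun a => ?_⟩
    have := congrFun (congrArg (Subtype.val) ht) a
    simpa [Matrix.mulVecLin_apply, Matrix.mulVec_single] using this.symm
  choose t ht using hcol
  -- the key minor identity
  have key : ∀ a b, R' a b * R' i0 i0 = R' a i0 * R' i0 b := by
    intro a b
    rw [ht, ht, ht, ht]
    ring
  have hdiag : ∀ a, R' a a = 1 := hR'.2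
  have key2 : ∀ a b, R' a b = R' a i0 * R' i0 b := by
    intro a b
    have := key a b
    rwa [hdiag, mul_one] at this
  set c : Fin n → ℂ := fun a => R' a i0 with hc
  have hherm : ∀ a b, R' a b = star (R' b a) := fun a b =>
    (congrFun (congrFun hR'.1.1.symm a) b)
  have hunit : ∀ a, c a * star (c a) = 1 := by
    intro a
    have h1 : R' a a = R' a i0 * R' i0 a := key2 a a
    rw [hdiag] at h1
    rw [hherm i0 a] at h1
    exact h1.symm
  have hR'cc : ∀ a b, R' a b = c a * star (c b) := by
    intro a b
    rw [key2 a b, hc]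
    congr 1
    exact hherm i0 b
  -- the conjugation identity
  set D : Matrix (Fin n) (Fin n) ℂ := Matrix.diagonal c with hD
  have hDRD : Matrix.hadamard R R' = D * R * Dᴴ := by
    ext a b
    simp only [hD, Matrix.diagonal_conjTranspose, Matrix.mul_diagonal, Matrix.diagonal_mul,
      Matrix.hadamard_apply, Pi.star_apply, hR'cc a b]
    ring
  have hdetD : IsUnit D.det := by
    rw [hD, Matrix.det_diagonal]
    refine IsUnit.of_mul_eq_one (∏ a, star (c a)) ?_
    rw [← Finset.prod_mul_distrib]
    exact Finset.prod_eq_one fun a _ => hunit a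
  have hdetDH : IsUnit Dᴴ.det := by
    rw [Matrix.det_conjTranspose]
    exact hdetD.map (starRingEnd ℂ)
  constructor
  · constructor
    · rw [hDRD]
      exact hR.1.mul_mul_conjTranspose_same D
    · intro a
      have : Matrix.hadamard R R' a a = R a a * R' a a := rfl
      rw [this, hR.2, hdiag, one_mul]
  · rw [hDRD, Matrix.rank_mul_eq_left_of_isUnit_det _ _ hdetDH,
      Matrix.rank_mul_eq_right_of_isUnit_det _ _ hdetD]
end

section
/- Let P be a correlation matrix of rank at least 3 generated by unit vectors {v_a : a ∈ [n]}, and suppose some v_c is not in the span of the remaining vectors and is orthogonal to every other vector v_a (a ≠ c). Then P = R ⊙ Q where R is a correlation matrix of rank exactly rank(P) − 1 and Q is a correlation matrix of rank at most 2; in particular P is (rank(P)−1)-decomposable. -/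
open scoped ComplexOrder ComplexInnerProductSpace

noncomputable def gramOf {n s : ℕ} (v : Fin n → EuclideanSpace ℂ (Fin s)) :
    Matrix (Fin n) (Fin n) ℂ :=
  Matrix.of fun a b => (⟪v a, v b⟫ : ℂ)

lemma gramOf_eq {n s : ℕ} (v : Fin n → EuclideanSpace ℂ (Fin s)) :
    gramOf v = (Matrix.of fun (i : Fin s) a => v a i).conjTranspose *
      (Matrix.of fun (i : Fin s) a => v a i) := by
  ext a b
  simp [gramOf, Matrix.mul_apply, Matrix.conjTranspose_apply, PiLp.inner_apply, RCLike.inner_apply]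
  exact Finset.sum_congr rfl fun _ _ => mul_comm _ _

lemma gramOf_posSemidef {n s : ℕ} (v : Fin n → EuclideanSpace ℂ (Fin s)) :
    (gramOf v).PosSemidef := by
  rw [gramOf_eq]; exact Matrix.posSemidef_conjTranspose_mul_self _

lemma gramOf_rank {n s : ℕ} (v : Fin n → EuclideanSpace ℂ (Fin s)) :
    (gramOf v).rank = Module.finrank ℂ (Submodule.span ℂ (Set.range v)) := by
  rw [gramOf_eq, Matrix.rank_conjTranspose_mul_self, Matrix.rank_eq_finrank_span_cols]
  rw [← LinearEquiv.finrank_map_eq (WithLp.linearEquiv 2 ℂ (Fin s → ℂ)), Submodule.map_span,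
    ← Set.range_comp]
  rfl

lemma gramOf_diag {n s : ℕ} (v : Fin n → EuclideanSpace ℂ (Fin s)) (a : Fin n)
    (h : ‖v a‖ = 1) : gramOf v a a = 1 := by
  show (⟪v a, v a⟫ : ℂ) = 1
  rw [inner_self_eq_norm_sq_to_K, h]
  norm_num

/-- If `P` has rank at least 3 and is generated by unit vectors among which `v c` is
linearly independent from (and orthogonal to) the rest, then `P = R ⊙ Q` with `R` a
correlation matrix of rank `rank P - 1` and `Q` a correlation matrix of rank at most 2;
in particular `P` is `(rank P - 1)`-decomposable. -/
theorem stmt6 (n s : ℕ) (P : Matrix (Fin n) (Fin n) ℂ)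
    (v : Fin n → EuclideanSpace ℂ (Fin s)) (hv : ∀ a, ‖v a‖ = 1)
    (hgen : ∀ a b, P a b = ⟪v a, v b⟫) (hrank : 3 ≤ P.rank) (c : Fin n)
    (hc : v c ∉ Submodule.span ℂ {x | ∃ a, a ≠ c ∧ x = v a})
    (horth : ∀ a, a ≠ c → ⟪v c, v a⟫ = 0) :
    (∃ R Q : Matrix (Fin n) (Fin n) ℂ, IsCorrMat R ∧ R.rank = P.rank - 1 ∧
      IsCorrMat Q ∧ Q.rank ≤ 2 ∧ P = Matrix.hadamard R Q) ∧
    IsDecomposable (P.rank - 1) P := by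
  classical
  have hvc0 : v c ≠ 0 := fun h => by simpa [h] using hv c
  have hn : 3 ≤ n := le_trans hrank (by simpa using P.rank_le_card_width)
  have hnt : Nontrivial (Fin n) := Fin.nontrivial_iff_two_le.2 (by omega)
  obtain ⟨a0, ha0⟩ := exists_ne c
  set S : Set (EuclideanSpace ℂ (Fin s)) := {x | ∃ a, a ≠ c ∧ x = v a} with hS
  set u : Fin n → EuclideanSpace ℂ (Fin s) := fun a => if a = c then v a0 else v a with hu
  set w : Fin n → EuclideanSpace ℂ (Fin 2) :=
    fun a => EuclideanSpace.single (if a = c then 1 else 0) 1 with hw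
  have hP : P = gramOf v := by ext a b; exact hgen a b
  have hrangeu : Set.range u = S := by
    ext x; constructor
    · rintro ⟨a, rfl⟩
      by_cases h : a = c
      · exact ⟨a0, ha0, by simp [hu, h]⟩
      · exact ⟨a, h, by simp [hu, h]⟩
    · rintro ⟨a, ha, rfl⟩; exact ⟨a, by simp [hu, ha]⟩
  have hrangev : Set.range v = insert (v c) S := by
    ext x; constructor
    · rintro ⟨a, rfl⟩
      by_cases h : a = c
      · exact Or.inl (by rw [h])
      · exact Or.inr ⟨a, h, rfl⟩
    · rintro (rfl | ⟨a, ha, rfl⟩)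
      exacts [⟨c, rfl⟩, ⟨a, rfl⟩]
  have hfin : Module.finrank ℂ (Submodule.span ℂ (Set.range v))
      = Module.finrank ℂ (Submodule.span ℂ S) + 1 := by
    rw [hrangev, Submodule.span_insert]
    have hdis : Disjoint (Submodule.span ℂ S) (ℂ ∙ v c) :=
      (Submodule.disjoint_span_singleton' hvc0).2 hc
    have h2 := Submodule.finrank_sup_add_finrank_inf_eq (Submodule.span ℂ {v c})
      (Submodule.span ℂ S)
    rw [hdis.symm.eq_bot, finrank_bot, add_zero,
      finrank_span_singleton hvc0] at h2
    omega
  have hrankP : P.rank = Module.finrank ℂ (Submodule.span ℂ S) + 1 := by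
    rw [hP, gramOf_rank, hfin]
  have hrankR : (gramOf u).rank = P.rank - 1 := by
    rw [gramOf_rank, hrangeu]; omega
  have hQentry : ∀ a b, gramOf w a b =
      if ((a = c) ↔ (b = c)) then (1 : ℂ) else 0 := by
    intro a b
    simp only [gramOf, hw, Matrix.of_apply, EuclideanSpace.inner_single_left, map_one, one_mul,
      EuclideanSpace.single_apply]
    by_cases ha : a = c <;> by_cases hb : b = c <;> simp [ha, hb]
  have hnormu : ∀ a, ‖u a‖ = 1 := by
    intro a
    by_cases h : a = c <;> simp [hu, h, hv]
  have hcorrR : IsCorrMat (gramOf u) :=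
    ⟨gramOf_posSemidef u, fun a => gramOf_diag u a (hnormu a)⟩
  have hcorrQ : IsCorrMat (gramOf w) :=
    ⟨gramOf_posSemidef w, fun a => by simp [hQentry]⟩
  have hrankQ : (gramOf w).rank ≤ 2 := by
    rw [gramOf_eq, Matrix.rank_conjTranspose_mul_self]
    exact (Matrix.rank_le_card_height _).trans (Fintype.card_fin 2).le
  have hgR : ∀ a b, gramOf u a b = ⟪u a, u b⟫ := fun _ _ => rfl
  have hhad : ∀ a b, P a b = gramOf u a b * gramOf w a b := by
    intro a b
    rw [hQentry, hgen]
    by_cases ha : a = c <;> by_cases hb : b = c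
    · rw [ha, hb, if_pos Iff.rfl, gramOf_diag u c (hnormu c), mul_one,
        inner_self_eq_norm_sq_to_K, hv]
      norm_num
    · subst ha
      rw [if_neg (by simp [hb]), mul_zero, horth b hb]
    · subst hb
      rw [if_neg (by simp [ha]), mul_zero, ← inner_conj_symm, horth a ha, map_zero]
    · rw [if_pos (by simp [ha, hb]), mul_one, hgR]
      simp [hu, ha, hb]
  refine ⟨⟨gramOf u, gramOf w, hcorrR, hrankR, hcorrQ, hrankQ, ?_⟩,
    2, two_pos, ![gramOf u, gramOf w], ?_, ?_⟩
  · ext a b; rw [Matrix.hadamard_apply]; exact hhad a b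
  · intro i
    fin_cases i
    · exact ⟨hcorrR, le_of_eq hrankR⟩
    · simp only [Matrix.cons_val_one, Matrix.head_cons]
      exact ⟨hcorrQ, le_trans hrankQ (by omega)⟩
  · intro a b
    rw [Fin.prod_univ_two]
    exact hhad a b
end

section
/- Let {v_a : a ∈ [n]} be unit vectors in ℂ^s generating a correlation matrix P of rank at least 3, and let c ∈ [n] be an index with v_c not in the span of {v_a : a ≠ c} and v_c not orthogonal to all other vectors. Let Π be the orthogonal projection onto span{v_a : a ≠ c}, define R(a,b) = ⟨v_a, Π v_b⟩/(‖Π v_a‖·‖Π v_b‖), and define Q(a,b) = ‖Π v_c‖ if a ≠ b and c ∈ {a,b}, and Q(a,b) = 1 otherwise. Then P = R ⊙ Q, R is a correlation matrix of rank rank(P) − 1, and Q is a correlation matrix of rank 2. -/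
open scoped ComplexOrder ComplexInnerProductSpace

section GramAux

open Matrix

/-- A Gram matrix equals `Bᴴ * B` for the matrix `B` of column vectors. -/
lemma gram_eq_conjTranspose_mul_self {n m : ℕ} (w : Fin n → EuclideanSpace ℂ (Fin m))
    (G : Matrix (Fin n) (Fin n) ℂ) (hG : ∀ a b, G a b = ⟪w a, w b⟫) :
    G = (Matrix.of fun i a => w a i)ᴴ * (Matrix.of fun i a => w a i) := by
  ext a b
  rw [hG, Matrix.mul_apply, PiLp.inner_apply]
  simp [Matrix.conjTranspose_apply, RCLike.inner_apply]
  exact Finset.sum_congr rfl fun _ _ => mul_comm _ _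

lemma gram_posSemidef {n m : ℕ} (w : Fin n → EuclideanSpace ℂ (Fin m))
    (G : Matrix (Fin n) (Fin n) ℂ) (hG : ∀ a b, G a b = ⟪w a, w b⟫) :
    G.PosSemidef := by
  rw [gram_eq_conjTranspose_mul_self w G hG]
  exact Matrix.posSemidef_conjTranspose_mul_self _

/-- The rank of a Gram matrix is the dimension of the span of the vectors. -/
lemma gram_rank {n m : ℕ} (w : Fin n → EuclideanSpace ℂ (Fin m))
    (G : Matrix (Fin n) (Fin n) ℂ) (hG : ∀ a b, G a b = ⟪w a, w b⟫) :
    G.rank = Module.finrank ℂ (Submodule.span ℂ (Set.range w)) := by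
  rw [gram_eq_conjTranspose_mul_self w G hG, Matrix.rank_conjTranspose_mul_self,
    Matrix.rank_eq_finrank_span_cols]
  let e : EuclideanSpace ℂ (Fin m) ≃ₗ[ℂ] (Fin m → ℂ) := WithLp.linearEquiv 2 ℂ (Fin m → ℂ)
  have hr : Set.range (Matrix.of fun i a => w a i).col = e '' Set.range w := by
    rw [← Set.range_comp]; rfl
  rw [hr, ← LinearEquiv.coe_coe (e := e), ← Submodule.map_span]
  exact LinearEquiv.finrank_map_eq e _

end GramAux

set_option maxHeartbeats 1000000 in
/-- The explicit construction: with `Π` the orthogonal projection onto the span of the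
vectors other than `v c`, and `R`, `Q` as defined, `P = R ⊙ Q`, `R` is a correlation
matrix of rank `rank P - 1`, and `Q` is a correlation matrix of rank 2. -/
theorem stmt7 (n s : ℕ) (P : Matrix (Fin n) (Fin n) ℂ)
    (v : Fin n → EuclideanSpace ℂ (Fin s)) (hv : ∀ a, ‖v a‖ = 1)
    (hgen : ∀ a b, P a b = ⟪v a, v b⟫) (hrank : 3 ≤ P.rank) (c : Fin n)
    (hc : v c ∉ Submodule.span ℂ {x | ∃ a, a ≠ c ∧ x = v a})
    (hnotorth : ∃ a, a ≠ c ∧ ⟪v c, v a⟫ ≠ 0)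
    (K : Submodule ℂ (EuclideanSpace ℂ (Fin s)))
    (hK : K = Submodule.span ℂ {x | ∃ a, a ≠ c ∧ x = v a})
    (R Q : Matrix (Fin n) (Fin n) ℂ)
    (hR : ∀ a b, R a b =
      ⟪v a, (K.orthogonalProjection (v b) : EuclideanSpace ℂ (Fin s))⟫ /
        (((‖(K.orthogonalProjection (v a) : EuclideanSpace ℂ (Fin s))‖ : ℝ) : ℂ) *
         ((‖(K.orthogonalProjection (v b) : EuclideanSpace ℂ (Fin s))‖ : ℝ) : ℂ)))
    (hQ : ∀ a b, Q a b = if a ≠ b ∧ (a = c ∨ b = c) then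
      (((‖(K.orthogonalProjection (v c) : EuclideanSpace ℂ (Fin s))‖ : ℝ) : ℂ)) else 1) :
    P = Matrix.hadamard R Q ∧ IsCorrMat R ∧ R.rank = P.rank - 1 ∧
      IsCorrMat Q ∧ Q.rank = 2 := by
  classical
  -- basic setup
  set p : Fin n → EuclideanSpace ℂ (Fin s) :=
    fun a => (K.orthogonalProjection (v a) : EuclideanSpace ℂ (Fin s)) with hp
  have hvK : ∀ a, a ≠ c → v a ∈ K := fun a ha => hK ▸ Submodule.subset_span ⟨a, ha, rfl⟩
  have hpa : ∀ a, a ≠ c → p a = v a := fun a ha =>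
    K.starProjection_eq_self_iff.mpr (hvK a ha)
  have hpK : ∀ a, p a ∈ K := fun a => (K.orthogonalProjection (v a)).2
  have hsub : ∀ a, v a - p a ∈ Kᗮ := fun a => K.sub_starProjection_mem_orthogonal (v a)
  -- moving the projection across the inner product
  have hinner_right : ∀ a b, ⟪v a, p b⟫ = ⟪p a, p b⟫ := by
    intro a b
    have h0 : ⟪v a - p a, p b⟫ = 0 := K.starProjection_inner_eq_zero (v a) (p b) (hpK b)
    rw [inner_sub_left, sub_eq_zero] at h0
    exact h0
  have hinner_vv : ∀ a b, b ≠ c → ⟪v a, p b⟫ = ⟪v a, v b⟫ := by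
    intro a b hb; rw [hpa b hb]
  have hinner_vc : ∀ a, a ≠ c → ⟪v a, p c⟫ = ⟪v a, v c⟫ := by
    intro a ha
    have h0 : ⟪v a, v c - p c⟫ = 0 :=
      (Submodule.mem_orthogonal K _).mp (hsub c) (v a) (hvK a ha)
    rw [inner_sub_right, sub_eq_zero] at h0
    exact h0.symm
  -- `p c ≠ 0`
  have hpc_ne : p c ≠ 0 := by
    obtain ⟨a, hac, hia⟩ := hnotorth
    intro h0
    apply hia
    have h1 : ⟪v c - p c, v a⟫ = 0 :=
      K.starProjection_inner_eq_zero (v c) (v a) (hvK a hac)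
    rwa [h0, sub_zero] at h1
  set t : ℝ := ‖p c‖ with ht
  have hpnorm : ∀ a, a ≠ c → ‖p a‖ = 1 := fun a ha => by rw [hpa a ha, hv a]
  have ht0 : 0 < t := norm_pos_iff.mpr hpc_ne
  have hvcK : v c ∉ K := hK ▸ hc
  -- `t < 1`
  have ht1 : t < 1 := by
    have hiz : ⟪p c, v c - p c⟫ = 0 :=
      (Submodule.mem_orthogonal K _).mp (hsub c) (p c) (hpK c)
    have hdec : ‖v c‖ ^ 2 = ‖p c‖ ^ 2 + ‖v c - p c‖ ^ 2 := by
      have h := norm_add_sq_eq_norm_sq_add_norm_sq_of_inner_eq_zero (p c) (v c - p c) hiz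
      have h2 : p c + (v c - p c) = v c := by abel
      rw [h2] at h
      rw [pow_two, pow_two, pow_two]
      exact h
    rw [hv c] at hdec
    have hd0 : v c - p c ≠ 0 := by
      intro h
      rw [sub_eq_zero] at h
      exact hvcK (h ▸ hpK c)
    have hd : 0 < ‖v c - p c‖ := norm_pos_iff.mpr hd0
    nlinarith [sq_nonneg (t - 1), sq_nonneg (t + 1)]
  -- the unit vectors generating R
  set w : Fin n → EuclideanSpace ℂ (Fin s) := fun a => ((‖p a‖ : ℂ))⁻¹ • p a with hw
  have hwnorm : ∀ a, ‖w a‖ = 1 := by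
    intro a
    have hne : ‖p a‖ ≠ 0 := by
      rcases eq_or_ne a c with rfl | h
      · exact ne_of_gt ht0
      · rw [hpnorm a h]; norm_num
    rw [hw]
    simp only [norm_smul, norm_inv, Complex.norm_real, Real.norm_eq_abs, abs_norm]
    field_simp
  have hRw : ∀ a b, R a b = ⟪w a, w b⟫ := by
    intro a b
    rw [show R a b = ⟪v a, p b⟫ / (((‖p a‖ : ℝ) : ℂ) * ((‖p b‖ : ℝ) : ℂ)) from hR a b, hw]
    have hne : ∀ x, ((‖p x‖ : ℝ) : ℂ) ≠ 0 := by
      intro x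
      rcases eq_or_ne x c with rfl | h
      · simpa [ht] using hpc_ne
      · rw [hpnorm x h]; norm_num
    rw [inner_smul_left, inner_smul_right, ← hinner_right a b, map_inv₀, Complex.conj_ofReal]
    field_simp
  -- IsCorrMat R
  have hRpsd : R.PosSemidef := gram_posSemidef w R hRw
  have hRdiag : ∀ a, R a a = 1 := by
    intro a
    rw [hRw a a, inner_self_eq_norm_sq_to_K (𝕜 := ℂ), hwnorm a]
    norm_num
  -- rank of R
  have hspanw : Submodule.span ℂ (Set.range w) = K := by
    apply le_antisymm
    · rw [Submodule.span_le]
      rintro x ⟨a, rfl⟩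
      exact Submodule.smul_mem _ _ (hpK a)
    · rw [hK, Submodule.span_le]
      rintro x ⟨a, ha, rfl⟩
      have : w a = v a := by
        rw [hw]
        simp only [hpa a ha, hv a]
        norm_num
      rw [← this]
      exact Submodule.subset_span ⟨a, rfl⟩
  have hrankR : R.rank = Module.finrank ℂ K := by
    rw [gram_rank w R hRw, hspanw]
  -- rank of P
  have hrankP : P.rank = Module.finrank ℂ K + 1 := by
    rw [gram_rank v P hgen]
    have hspan : Submodule.span ℂ (Set.range v) = K ⊔ (ℂ ∙ v c) := by
      apply le_antisymm
      · rw [Submodule.span_le]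
        rintro x ⟨a, rfl⟩
        rcases eq_or_ne a c with rfl | h
        · exact Submodule.mem_sup_right (Submodule.mem_span_singleton_self _)
        · exact Submodule.mem_sup_left (hvK a h)
      · apply sup_le
        · rw [hK, Submodule.span_le]
          rintro x ⟨a, _, rfl⟩
          exact Submodule.subset_span ⟨a, rfl⟩
        · rw [Submodule.span_le, Set.singleton_subset_iff]
          exact Submodule.subset_span ⟨c, rfl⟩
    rw [hspan]
    have hlt : K < K ⊔ (ℂ ∙ v c) := by
      refine lt_of_le_of_ne le_sup_left fun h => ?_
      exact hvcK (h ▸ Submodule.mem_sup_right (Submodule.mem_span_singleton_self _))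
    have h1 : Module.finrank ℂ K < Module.finrank ℂ ↥(K ⊔ (ℂ ∙ v c)) :=
      Submodule.finrank_lt_finrank_of_lt hlt
    have hvc0 : v c ≠ 0 := by
      intro h
      have h1 := hv c
      rw [h] at h1
      simpa using h1
    have h2 : Module.finrank ℂ ↥(K ⊔ (ℂ ∙ v c)) + Module.finrank ℂ ↥(K ⊓ (ℂ ∙ v c)) =
        Module.finrank ℂ K + Module.finrank ℂ ↥(ℂ ∙ v c) :=
      Submodule.finrank_sup_add_finrank_inf_eq K (ℂ ∙ v c)
    rw [finrank_span_singleton hvc0] at h2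
    omega
  -- the rank-2 vectors generating Q
  set s' : ℝ := Real.sqrt (1 - t ^ 2) with hs'
  have hs'0 : 0 < s' := Real.sqrt_pos.mpr (by nlinarith)
  have hs'sq : s' ^ 2 = 1 - t ^ 2 := Real.sq_sqrt (by nlinarith)
  set u : Fin n → EuclideanSpace ℂ (Fin 2) := fun a =>
    (WithLp.equiv 2 (Fin 2 → ℂ)).symm
      (if a = c then ![(t : ℂ), (s' : ℂ)] else ![1, 0]) with hu
  have hu_c0 : u c 0 = (t : ℂ) := by simp [hu]
  have hu_c1 : u c 1 = (s' : ℂ) := by simp [hu]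
  have hu_n0 : ∀ a, a ≠ c → u a 0 = 1 := fun a ha => by simp [hu, ha]
  have hu_n1 : ∀ a, a ≠ c → u a 1 = 0 := fun a ha => by simp [hu, ha]
  have hQu : ∀ a b, Q a b = ⟪u a, u b⟫ := by
    intro a b
    rw [hQ a b]
    simp only [PiLp.inner_apply, RCLike.inner_apply, Fin.sum_univ_two]
    by_cases hac : a = c <;> by_cases hbc : b = c
    · have hab : a = b := hac.trans hbc.symm
      rw [if_neg (by simp [hab]), hac, hbc, hu_c0, hu_c1,
        Complex.conj_ofReal, Complex.conj_ofReal]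
      have hre : t * t + s' * s' = (1 : ℝ) := by nlinarith [hs'sq]
      exact_mod_cast congrArg (fun x : ℝ => (x : ℂ)) hre.symm
    · have hab : a ≠ b := fun h => hbc (h ▸ hac)
      rw [if_pos (show a ≠ b ∧ (a = c ∨ b = c) from ⟨hab, Or.inl hac⟩),
        hac, hu_c0, hu_c1, hu_n0 b hbc, hu_n1 b hbc, Complex.conj_ofReal,
        Complex.conj_ofReal]
      ring
    · have hab : a ≠ b := fun h => hac (h.symm ▸ hbc)
      rw [if_pos (show a ≠ b ∧ (a = c ∨ b = c) from ⟨hab, Or.inr hbc⟩),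
        hbc, hu_c0, hu_c1, hu_n0 a hac, hu_n1 a hac]
      simp
    · rw [if_neg (by tauto), hu_n0 a hac, hu_n1 a hac, hu_n0 b hbc, hu_n1 b hbc]
      simp
  have hQpsd : Q.PosSemidef := gram_posSemidef u Q hQu
  have hQdiag : ∀ a, Q a a = 1 := by
    intro a
    rw [hQ a a]
    simp
  -- rank of Q
  obtain ⟨a0, ha0, -⟩ := hnotorth
  have hrankQ : Q.rank = 2 := by
    rw [gram_rank u Q hQu]
    have hindep : LinearIndependent ℂ ![u a0, u c] := by
      rw [LinearIndependent.pair_iff]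
      intro α β hαβ
      have h1 : (α • u a0 + β • u c) 1 = 0 := by rw [hαβ]; rfl
      rw [PiLp.add_apply, PiLp.smul_apply, PiLp.smul_apply, hu_n1 a0 ha0, hu_c1] at h1
      have hβ : β = 0 := by
        have hs'ne : ((s' : ℝ) : ℂ) ≠ 0 := by exact_mod_cast ne_of_gt hs'0
        simpa [smul_eq_mul, hs'ne] using h1
      refine ⟨?_, hβ⟩
      have h0 : (α • u a0 + β • u c) 0 = 0 := by rw [hαβ]; rfl
      rw [PiLp.add_apply, PiLp.smul_apply, PiLp.smul_apply, hu_n0 a0 ha0, hu_c0, hβ] at h0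
      simpa using h0
    have hle1 : Module.finrank ℂ (Submodule.span ℂ (Set.range ![u a0, u c])) ≤
        Module.finrank ℂ (Submodule.span ℂ (Set.range u)) := by
      apply Submodule.finrank_mono
      apply Submodule.span_mono
      rintro x ⟨i, rfl⟩
      fin_cases i
      · exact ⟨a0, rfl⟩
      · exact ⟨c, rfl⟩
    rw [finrank_span_eq_card hindep] at hle1
    simp only [Fintype.card_fin] at hle1
    have hle2 : Module.finrank ℂ (Submodule.span ℂ (Set.range u)) ≤ 2 := by
      have := Submodule.finrank_le (Submodule.span ℂ (Set.range u))
      rwa [finrank_euclideanSpace_fin] at this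
    omega
  -- the Hadamard identity
  have hproj : ∀ a, (K.orthogonalProjection (v a) : EuclideanSpace ℂ (Fin s)) = p a :=
    fun _ => rfl
  have hR' : ∀ a b, R a b = ⟪v a, p b⟫ / (((‖p a‖ : ℝ) : ℂ) * ((‖p b‖ : ℝ) : ℂ)) := hR
  have htC : ((t : ℝ) : ℂ) ≠ 0 := by exact_mod_cast ne_of_gt ht0
  have hhad : P = Matrix.hadamard R Q := by
    ext a b
    rw [Matrix.hadamard_apply]
    rcases eq_or_ne a b with rfl | hab
    · rw [hRdiag a, hQdiag a, one_mul, hgen, inner_self_eq_norm_sq_to_K (𝕜 := ℂ), hv a]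
      norm_num
    · by_cases hac : a = c <;> by_cases hbc : b = c
      · exact absurd (hac.trans hbc.symm) hab
      · -- a = c, b ≠ c
        rw [hR', hQ, if_pos (show a ≠ b ∧ (a = c ∨ b = c) from ⟨hab, Or.inl hac⟩), hgen,
          hinner_vv a b hbc, hpnorm b hbc, hac, ← ht, Complex.ofReal_one]
        field_simp
      · -- a ≠ c, b = c
        rw [hR', hQ, if_pos (show a ≠ b ∧ (a = c ∨ b = c) from ⟨hab, Or.inr hbc⟩), hgen,
          hbc, hinner_vc a hac, hpnorm a hac, ← ht, Complex.ofReal_one]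
        field_simp
      · -- a ≠ c, b ≠ c
        rw [hR', hQ, if_neg (by tauto), hgen,
          hinner_vv a b hbc, hpnorm a hac, hpnorm b hbc]
        norm_num
  exact ⟨hhad, ⟨hRpsd, hRdiag⟩, by omega, ⟨hQpsd, hQdiag⟩, hrankQ⟩
end

section
/- For every integer r ≥ 2, every (r+1)×(r+1) correlation matrix is r-decomposable, i.e., Corr_r(ℂ^{r+1}) = Corr(ℂ^{r+1}). -/
open scoped ComplexOrder ComplexInnerProductSpace
open Matrix

section Helpers

variable {N : ℕ}

/-- For a Hermitian matrix the quadratic form is real. -/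
lemma herm_quad_real {A : Matrix (Fin N) (Fin N) ℂ} (hA : A.IsHermitian) (x : Fin N → ℂ) :
    star x ⬝ᵥ A *ᵥ x = (((star x ⬝ᵥ A *ᵥ x).re : ℝ) : ℂ) := by
  rw [eq_comm, ← Complex.conj_eq_iff_re, eq_comm]
  simp only [dotProduct, mulVec, Pi.star_apply, RCLike.star_def, map_sum, _root_.map_mul,
    Complex.conj_conj, hA.apply, Finset.mul_sum]
  rw [Finset.sum_comm]
  refine Finset.sum_congr rfl fun i _ => Finset.sum_congr rfl fun j _ => ?_
  rw [show (starRingEnd ℂ) (A i j) = A j i from hA.apply j i]; ring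

lemma quad_diff_bound (A B : Matrix (Fin N) (Fin N) ℂ) (x : Fin N → ℂ) {d : ℝ}
    (hd : ∀ i j, ‖A i j - B i j‖ ≤ d) :
    (star x ⬝ᵥ A *ᵥ x).re - (star x ⬝ᵥ B *ᵥ x).re ≤ d * (∑ i, ‖x i‖) ^ 2 := by
  have h1 : (star x ⬝ᵥ A *ᵥ x).re - (star x ⬝ᵥ B *ᵥ x).re
      = (star x ⬝ᵥ (A - B) *ᵥ x).re := by
    rw [Matrix.sub_mulVec, dotProduct_sub, Complex.sub_re]
  rw [h1]
  calc (star x ⬝ᵥ (A - B) *ᵥ x).re ≤ ‖star x ⬝ᵥ (A - B) *ᵥ x‖ := Complex.re_le_norm _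
    _ ≤ ∑ i, ‖star x i * ((A - B) *ᵥ x) i‖ := norm_sum_le _ _
    _ ≤ ∑ i, ∑ j, ‖x i‖ * (‖A i j - B i j‖ * ‖x j‖) := by
        refine Finset.sum_le_sum fun i _ => ?_
        rw [norm_mul, Pi.star_apply, norm_star]
        rw [show ((A - B) *ᵥ x) i = ∑ j, (A i j - B i j) * x j from rfl]
        calc ‖x i‖ * ‖∑ j, (A i j - B i j) * x j‖
            ≤ ‖x i‖ * ∑ j, ‖(A i j - B i j) * x j‖ := by
              exact mul_le_mul_of_nonneg_left (norm_sum_le _ _) (norm_nonneg _)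
          _ = ∑ j, ‖x i‖ * (‖A i j - B i j‖ * ‖x j‖) := by
              rw [Finset.mul_sum]; exact Finset.sum_congr rfl fun j _ => by rw [norm_mul]
    _ ≤ ∑ i, ∑ j, ‖x i‖ * (d * ‖x j‖) := by
        refine Finset.sum_le_sum fun i _ => Finset.sum_le_sum fun j _ => ?_
        exact mul_le_mul_of_nonneg_left
          (mul_le_mul_of_nonneg_right (hd i j) (norm_nonneg _)) (norm_nonneg _)
    _ = d * (∑ i, ‖x i‖) ^ 2 := by
        simp_rw [← Finset.mul_sum]
        rw [← Finset.sum_mul]; ring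

lemma sq_sum_norm_le (x : Fin N → ℂ) : (∑ i, ‖x i‖) ^ 2 ≤ N * ∑ i, ‖x i‖ ^ 2 := by
  have := Finset.sum_mul_sq_le_sq_mul_sq Finset.univ (fun _ : Fin N => (1 : ℝ)) (fun i => ‖x i‖)
  simpa using this

lemma rank_lt_of_det_eq_zero {A : Matrix (Fin N) (Fin N) ℂ} (hH : A.IsHermitian)
    (h : A.det = 0) (hN : 0 < N) : A.rank < N := by
  have hprod := hH.det_eq_prod_eigenvalues
  rw [h] at hprod
  have : ∃ i : Fin N, hH.eigenvalues i = 0 := by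
    by_contra hc
    push_neg at hc
    refine (Finset.prod_ne_zero_iff.mpr fun i _ h0 => hc i ?_) hprod.symm
    exact Complex.ofReal_eq_zero.mp h0
  obtain ⟨i0, hi0⟩ := this
  rw [hH.rank_eq_card_non_zero_eigs]
  calc Fintype.card {i // hH.eigenvalues i ≠ 0} < Fintype.card (Fin N) :=
        Fintype.card_subtype_lt (x := i0) (by simp [hi0])
    _ = N := Fintype.card_fin N

lemma psd_det_nonneg {A : Matrix (Fin N) (Fin N) ℂ} (hA : A.PosSemidef) : 0 ≤ A.det := by
  calc (0 : ℂ) ≤ ((∏ i, hA.1.eigenvalues i : ℝ) : ℂ) := by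
        rw [Complex.zero_le_real]
        exact Finset.prod_nonneg fun i _ => hA.eigenvalues_nonneg i
    _ = ∏ i, ((hA.1.eigenvalues i : ℝ) : ℂ) := by push_cast; rfl
    _ = A.det := hA.1.det_eq_prod_eigenvalues.symm

lemma posdef_quant {A : Matrix (Fin N) (Fin N) ℂ} (hA : A.PosSemidef) (hdet : A.det ≠ 0)
    (hN : 0 < N) :
    ∃ ε : ℝ, 0 < ε ∧ ∀ x : Fin N → ℂ, ε * ∑ i, ‖x i‖ ^ 2 ≤ (star x ⬝ᵥ A *ᵥ x).re := by
  haveI : Nonempty (Fin N) := ⟨⟨0, hN⟩⟩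
  set lam := hA.1.eigenvalues with hlam
  have hnn : ∀ i, 0 ≤ lam i := hA.eigenvalues_nonneg
  have hne : ∀ i, lam i ≠ 0 := by
    intro i h0
    apply hdet
    rw [hA.1.det_eq_prod_eigenvalues]
    exact Finset.prod_eq_zero (Finset.mem_univ i) (by rw [← hlam, h0]; simp)
  set ε := Finset.univ.inf' Finset.univ_nonempty lam with hε
  have hεpos : 0 < ε := by
    rw [hε, Finset.lt_inf'_iff]
    exact fun i _ => lt_of_le_of_ne (hnn i) (Ne.symm (hne i))
  refine ⟨ε, hεpos, fun x => ?_⟩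
  set U := (hA.1.eigenvectorUnitary : Matrix (Fin N) (Fin N) ℂ) with hU
  have hUU : U * star U = 1 := Matrix.mem_unitaryGroup_iff.mp hA.1.eigenvectorUnitary.2
  have hkey : (A - (ε : ℂ) • 1).PosSemidef := by
    have hsp := hA.1.spectral_theorem
    have hdiag : (Matrix.diagonal (fun i => ((lam i - ε : ℝ) : ℂ))).PosSemidef := by
      refine Matrix.PosSemidef.diagonal fun i => ?_
      rw [Pi.zero_apply, Complex.zero_le_real]
      exact sub_nonneg.mpr (Finset.inf'_le _ (Finset.mem_univ i))
    have hfact : A - (ε : ℂ) • 1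
        = U * Matrix.diagonal (fun i => ((lam i - ε : ℝ) : ℂ)) * Uᴴ := by
      have h2 : Matrix.diagonal (fun i => ((lam i - ε : ℝ) : ℂ))
          = Matrix.diagonal (RCLike.ofReal ∘ lam) - (ε : ℂ) • 1 := by
        ext i j
        rcases eq_or_ne i j with rfl | h
        · simp [Matrix.sub_apply, Complex.ofReal_sub]
        · simp [Matrix.sub_apply, h]
      rw [h2, Matrix.mul_sub, Matrix.sub_mul]
      rw [← Matrix.star_eq_conjTranspose]
      rw [show U * Matrix.diagonal (RCLike.ofReal ∘ lam) * star U = A by rw [hsp]; rfl]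
      congr 1
      rw [Matrix.mul_smul, Matrix.smul_mul, Matrix.mul_one, hUU]
    rw [hfact]
    exact hdiag.mul_mul_conjTranspose_same U
  have h1 : 0 ≤ (star x ⬝ᵥ (A - (ε : ℂ) • 1) *ᵥ x).re := by
    have := hkey.re_dotProduct_nonneg x
    simpa using this
  have h2 : (star x ⬝ᵥ ((ε : ℂ) • (1 : Matrix (Fin N) (Fin N) ℂ)) *ᵥ x).re
      = ε * ∑ i, ‖x i‖ ^ 2 := by
    rw [Matrix.smul_mulVec, Matrix.one_mulVec, dotProduct_smul]
    have hxx : star x ⬝ᵥ x = ((∑ i, ‖x i‖ ^ 2 : ℝ) : ℂ) := by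
      rw [dotProduct]
      push_cast
      refine Finset.sum_congr rfl fun i _ => ?_
      rw [Pi.star_apply, RCLike.star_def, mul_comm, Complex.mul_conj']
    rw [hxx, smul_eq_mul, ← Complex.ofReal_mul, Complex.ofReal_re]
  have hsplit : (star x ⬝ᵥ A *ᵥ x).re
      = (star x ⬝ᵥ (A - (ε : ℂ) • 1) *ᵥ x).re
        + (star x ⬝ᵥ ((ε : ℂ) • (1 : Matrix (Fin N) (Fin N) ℂ)) *ᵥ x).re := by
    rw [Matrix.sub_mulVec, dotProduct_sub, Complex.sub_re]
    ring
  rw [hsplit, h2]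
  linarith

/-- the symmetric real "scaling" pattern -/
noncomputable def auxs {N : ℕ} (a b : Fin N) (t : ℝ) (i j : Fin N) : ℝ :=
  if i = j then 1
  else if (i = a ∧ j = b) ∨ (i = b ∧ j = a) then Real.cos (2 * t)
  else if i = a ∨ i = b ∨ j = a ∨ j = b then Real.cos t
  else 1

/-- rank ≤ 2 family of unit vectors -/
noncomputable def auxW {N : ℕ} (a b : Fin N) (t : ℝ) : Matrix (Fin N) (Fin 2) ℂ :=
  fun i k =>
    if i = a then (if k = 0 then ((Real.cos t : ℝ) : ℂ) else ((Real.sin t : ℝ) : ℂ))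
    else if i = b then (if k = 0 then ((Real.cos t : ℝ) : ℂ) else ((-Real.sin t : ℝ) : ℂ))
    else (if k = 0 then 1 else 0)

lemma auxS_apply {N : ℕ} {a b : Fin N} (hab : a ≠ b) (t : ℝ) (i j : Fin N) :
    (auxW a b t * (auxW a b t)ᴴ) i j = ((auxs a b t i j : ℝ) : ℂ) := by
  have hsc : ((Real.sin t : ℝ) : ℂ) ^ 2 + ((Real.cos t : ℝ) : ℂ) ^ 2 = 1 := by
    exact_mod_cast congrArg (Complex.ofReal) (Real.sin_sq_add_cos_sq t)
  have h2t : ((Real.cos (2 * t) : ℝ) : ℂ)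
      = ((Real.cos t : ℝ) : ℂ) ^ 2 - ((Real.sin t : ℝ) : ℂ) ^ 2 := by
    exact_mod_cast congrArg (Complex.ofReal) (Real.cos_two_mul' t)
  rw [Matrix.mul_apply, Fin.sum_univ_two]
  simp only [Matrix.conjTranspose_apply, auxW, auxs, RCLike.star_def]
  by_cases hia : i = a <;> by_cases hib : i = b <;> by_cases hja : j = a <;>
    by_cases hjb : j = b <;>
    simp_all [Complex.conj_ofReal] <;>
    (try simp_all [← Complex.ofReal_cos, ← Complex.ofReal_sin, Complex.conj_ofReal, eq_comm]) <;>
    first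
      | rfl
      | (have h := congrArg (Complex.ofReal) (Real.cos_sq_add_sin_sq t);
         push_cast at h; linear_combination h)
      | (have h := congrArg (Complex.ofReal) (Real.cos_sq_add_sin_sq t);
         push_cast at h; linear_combination -h)
      | (have h := congrArg (Complex.ofReal) (Real.cos_two_mul' t);
         push_cast at h; linear_combination h)
      | (have h := congrArg (Complex.ofReal) (Real.cos_two_mul' t);
         push_cast at h; linear_combination -h)
      | (have h := congrArg (Complex.ofReal) (Real.cos_sq_add_sin_sq t);
         simp only [Complex.ofReal_add, Complex.ofReal_pow, Complex.ofReal_one] at h;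
         linear_combination h)
      | (have h := congrArg (Complex.ofReal) (Real.cos_sq_add_sin_sq t);
         simp only [Complex.ofReal_add, Complex.ofReal_pow, Complex.ofReal_one] at h;
         linear_combination -h)
      | ring

lemma auxs_symm {N : ℕ} {a b : Fin N} (hab : a ≠ b) (t : ℝ) (i j : Fin N) :
    auxs a b t i j = auxs a b t j i := by
  have hSh := (Matrix.posSemidef_self_mul_conjTranspose (auxW a b t)).1
  have h := hSh.apply i j
  rw [auxS_apply hab, auxS_apply hab, RCLike.star_def, Complex.conj_ofReal] at h
  exact_mod_cast h.symm

lemma auxs_diag {N : ℕ} (a b : Fin N) (t : ℝ) (i : Fin N) : auxs a b t i i = 1 := by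
  simp [auxs]

lemma auxs_ab {N : ℕ} {a b : Fin N} (hab : a ≠ b) (t : ℝ) :
    auxs a b t a b = Real.cos (2 * t) := by
  simp [auxs, hab]

lemma auxs_zero {N : ℕ} (a b : Fin N) (i j : Fin N) : auxs a b 0 i j = 1 := by
  unfold auxs; split_ifs <;> simp

lemma auxs_pos {N : ℕ} (a b : Fin N) {t : ℝ} (h0 : 0 ≤ t) (h : t < Real.pi / 4)
    (i j : Fin N) : 0 < auxs a b t i j := by
  have hpi := Real.pi_pos
  unfold auxs
  split_ifs
  · norm_num
  · exact Real.cos_pos_of_mem_Ioo ⟨by linarith, by linarith⟩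
  · exact Real.cos_pos_of_mem_Ioo ⟨by linarith, by linarith⟩
  · norm_num

lemma auxs_cont {N : ℕ} (a b : Fin N) (i j : Fin N) :
    Continuous fun t : ℝ => ((auxs a b t i j : ℝ) : ℂ) := by
  by_cases h1 : i = j
  · simp only [auxs, if_pos h1]; fun_prop
  · by_cases h2 : (i = a ∧ j = b) ∨ (i = b ∧ j = a)
    · simp only [auxs, if_neg h1, if_pos h2]; fun_prop
    · by_cases h3 : i = a ∨ i = b ∨ j = a ∨ j = b
      · simp only [auxs, if_neg h1, if_neg h2, if_pos h3]; fun_prop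
      · simp only [auxs, if_neg h1, if_neg h2, if_neg h3]; fun_prop

/-- `r`-block partition matrix builder -/
def pmat (r : ℕ) (g : Fin (r + 1) → Fin r) : Matrix (Fin (r + 1)) (Fin r) ℂ :=
  fun i k => if g i = k then 1 else 0

lemma pmat_mul_apply (r : ℕ) (g : Fin (r + 1) → Fin r) (i j : Fin (r + 1)) :
    (pmat r g * (pmat r g)ᴴ) i j = if g i = g j then 1 else 0 := by
  rw [Matrix.mul_apply, Finset.sum_eq_single (g i)]
  · simp [pmat, Matrix.conjTranspose_apply, apply_ite (star : ℂ → ℂ), eq_comm]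
  · intro k _ hk
    simp [pmat, Matrix.conjTranspose_apply, Ne.symm hk]
  · simp

def g1fun (r : ℕ) (hr : 2 ≤ r) : Fin (r + 1) → Fin r := fun i =>
  ⟨min (i.1 - 1) (r - 1), by omega⟩

def g2fun (r : ℕ) (hr : 2 ≤ r) : Fin (r + 1) → Fin r := fun i =>
  ⟨min (if i.1 ≤ 1 then i.1 else i.1 - 1) (r - 1), by omega⟩

lemma gfun_inj (r : ℕ) (hr : 2 ≤ r) (i j : Fin (r + 1))
    (h1 : g1fun r hr i = g1fun r hr j) (h2 : g2fun r hr i = g2fun r hr j) : i = j := by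
  have e1 := congrArg Fin.val h1
  have e2 := congrArg Fin.val h2
  simp only [g1fun, g2fun] at e1 e2
  have hi := i.2
  have hj := j.2
  apply Fin.ext
  split_ifs at e2 <;> omega

end Helpers


section Main

set_option maxHeartbeats 1000000 in
/-- For every `r ≥ 2`, every `(r+1) × (r+1)` correlation matrix is `r`-decomposable. -/
theorem stmt8 (r : ℕ) (hr : 2 ≤ r) (P : Matrix (Fin (r + 1)) (Fin (r + 1)) ℂ)
    (hP : IsCorrMat P) : IsDecomposable r P := by
  obtain ⟨hPSD, hdiag⟩ := hP
  by_cases hdet : P.det = 0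
  · -- already low rank
    refine ⟨1, one_pos, fun _ => P, fun i => ⟨⟨hPSD, hdiag⟩, ?_⟩, fun a b => ?_⟩
    · show P.rank ≤ r
      have := rank_lt_of_det_eq_zero hPSD.1 hdet (Nat.succ_pos r)
      omega
    · simp
  by_cases hI : ∀ i j : Fin (r + 1), i ≠ j → P i j = 0
  · -- identity-like case : product of two partition matrices
    refine ⟨2, two_pos, ![pmat r (g1fun r hr) * (pmat r (g1fun r hr))ᴴ,
        pmat r (g2fun r hr) * (pmat r (g2fun r hr))ᴴ], ?_, ?_⟩
    · have hcorr : ∀ g : Fin (r + 1) → Fin r,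
          IsCorrMat (pmat r g * (pmat r g)ᴴ) ∧ (pmat r g * (pmat r g)ᴴ).rank ≤ r := by
        intro g
        refine ⟨⟨Matrix.posSemidef_self_mul_conjTranspose _,
          fun a => by rw [pmat_mul_apply]; simp⟩, ?_⟩
        calc (pmat r g * (pmat r g)ᴴ).rank ≤ (pmat r g).rank := Matrix.rank_mul_le_left _ _
          _ ≤ Fintype.card (Fin r) := Matrix.rank_le_card_width _
          _ = r := Fintype.card_fin r
      intro i
      fin_cases i
      · exact hcorr _
      · exact hcorr _
    · intro i j
      rw [Fin.prod_univ_two]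
      simp only [Matrix.cons_val_zero, Matrix.cons_val_one, Matrix.head_cons]
      rw [pmat_mul_apply, pmat_mul_apply]
      rcases eq_or_ne i j with rfl | hij
      · simp [hdiag]
      · rw [hI i j hij]
        rcases eq_or_ne (g1fun r hr i) (g1fun r hr j) with h1 | h1
        · rcases eq_or_ne (g2fun r hr i) (g2fun r hr j) with h2 | h2
          · exact absurd (gfun_inj r hr i j h1 h2) hij
          · simp [h1, h2]
        · simp [h1]
  · -- main case
    push_neg at hI
    obtain ⟨a, b, hab, hPab⟩ := hI
    have hpi := Real.pi_pos
    set β : ℝ := min ‖P a b‖ 1 / 2 with hβ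
    have hPabn : 0 < ‖P a b‖ := norm_pos_iff.mpr hPab
    have hβpos : 0 < β := by
      have := lt_min hPabn one_pos
      rw [hβ]; linarith
    have hβle : β ≤ 1 / 2 := by
      have := min_le_right ‖P a b‖ 1
      rw [hβ]; linarith
    have hβlt : β < ‖P a b‖ := by
      have := min_le_left ‖P a b‖ 1
      rw [hβ]; linarith
    set c : ℝ := Real.arccos β / 2 with hc
    have hcpos : 0 < c := by
      have := Real.arccos_pos.2 (by linarith : β < 1)
      rw [hc]; linarith
    have hclt : c < Real.pi / 4 := by
      have := Real.arccos_lt_pi_div_two.2 hβpos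
      rw [hc]; linarith
    have hcos2c : Real.cos (2 * c) = β := by
      rw [hc, show 2 * (Real.arccos β / 2) = Real.arccos β by ring]
      exact Real.cos_arccos (by linarith) (by linarith)
    set R : ℝ → Matrix (Fin (r + 1)) (Fin (r + 1)) ℂ :=
      fun t i j => P i j / ((auxs a b t i j : ℝ) : ℂ) with hR
    have hherm : ∀ t, (R t).IsHermitian := by
      intro t
      ext i j
      rw [Matrix.conjTranspose_apply]
      simp only [hR]
      rw [star_div₀, RCLike.star_def, Complex.conj_ofReal,
        show (starRingEnd ℂ) (P j i) = P i j from hPSD.1.apply i j, auxs_symm hab]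
    have hdiagR : ∀ t i, R t i i = 1 := by
      intro t i
      simp only [hR]
      rw [auxs_diag, hdiag]
      simp
    have hR0 : R 0 = P := by
      ext i j
      simp only [hR]
      rw [auxs_zero]
      simp
    have hRcont : ∀ (i j : Fin (r + 1)), ∀ t0 ∈ Set.Icc (0 : ℝ) c,
        ContinuousAt (fun t => R t i j) t0 := by
      intro i j t0 ht0
      have h1 := auxs_cont a b i j
      have hne : ((auxs a b t0 i j : ℝ) : ℂ) ≠ 0 := by
        have := auxs_pos a b ht0.1 (lt_of_le_of_lt ht0.2 hclt) i j
        exact_mod_cast this.ne'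
      simp only [hR]
      exact continuousAt_const.div h1.continuousAt hne
    set T : Set ℝ := {t | t ∈ Set.Icc (0 : ℝ) c ∧ (R t).PosSemidef} with hT
    have hT0 : (0 : ℝ) ∈ T := ⟨⟨le_refl 0, le_of_lt hcpos⟩, by rw [hR0]; exact hPSD⟩
    have hTne : T.Nonempty := ⟨0, hT0⟩
    have hTbdd : BddAbove T := ⟨c, fun t ht => ht.1.2⟩
    set t₀ : ℝ := sSup T with ht₀
    have ht₀mem : t₀ ∈ Set.Icc (0 : ℝ) c :=
      ⟨le_csSup hTbdd hT0, csSup_le hTne fun t ht => ht.1.2⟩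
    have hclosure : t₀ ∈ closure T := csSup_mem_closure hTne hTbdd
    have hqcont : ∀ (x : Fin (r + 1) → ℂ), ∀ t0 ∈ Set.Icc (0 : ℝ) c,
        ContinuousAt (fun t => (star x ⬝ᵥ R t *ᵥ x).re) t0 := by
      intro x t0 ht0
      have key : ContinuousAt (fun t => star x ⬝ᵥ R t *ᵥ x) t0 := by
        have h2 : ContinuousAt (fun t => ∑ i, star x i * ∑ j, R t i j * x j) t0 := by
          exact tendsto_finset_sum _ (fun i _ => Filter.Tendsto.const_mul _
            (tendsto_finset_sum _ (fun j _ => (hRcont i j t0 ht0).mul continuousAt_const)))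
        exact h2
      exact (Complex.continuous_re.continuousAt).comp key
    have hPSDt₀ : (R t₀).PosSemidef := by
      refine Matrix.PosSemidef.of_dotProduct_mulVec_nonneg (hherm _) fun x => ?_
      rw [herm_quad_real (hherm _) x, Complex.zero_le_real]
      haveI hne : (nhdsWithin t₀ T).NeBot := mem_closure_iff_nhdsWithin_neBot.mp hclosure
      refine ge_of_tendsto ((hqcont x t₀ ht₀mem).continuousWithinAt (s := T)) ?_
      refine eventually_nhdsWithin_of_forall ?_
      intro t ht
      simpa using ht.2.re_dotProduct_nonneg x
    have hRcnot : ¬ (R c).PosSemidef := by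
      intro h
      have hdet2 := psd_det_nonneg (h.submatrix ![a, b])
      rw [Matrix.det_fin_two] at hdet2
      simp only [Matrix.submatrix_apply, Matrix.cons_val_zero, Matrix.cons_val_one,
        Matrix.head_cons] at hdet2
      have eab : R c a b = P a b / ((β : ℝ) : ℂ) := by
        simp only [hR]
        rw [auxs_ab hab, hcos2c]
      have eba : R c b a = star (R c a b) := ((hherm c).apply b a).symm
      rw [hdiagR c a, hdiagR c b, eba, eab, RCLike.star_def, Complex.mul_conj'] at hdet2
      have hnz : ‖P a b / ((β : ℝ) : ℂ)‖ = ‖P a b‖ / β := by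
        rw [norm_div]
        congr 1
        simp [abs_of_pos hβpos]
      rw [hnz] at hdet2
      have h1β : 1 < ‖P a b‖ / β := (one_lt_div hβpos).mpr hβlt
      have : (0 : ℂ) ≤ ((1 - (‖P a b‖ / β) ^ 2 : ℝ) : ℂ) := by
        convert hdet2 using 1
        push_cast
        ring
      rw [Complex.zero_le_real] at this
      nlinarith
    have ht₀lt : t₀ < c := lt_of_le_of_ne ht₀mem.2 (fun h => hRcnot (h ▸ hPSDt₀))
    have hdet₀ : (R t₀).det = 0 := by
      by_contra hd
      obtain ⟨ε, hεpos, hquad⟩ := posdef_quant hPSDt₀ hd (Nat.succ_pos r)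
      set δ' : ℝ := ε / (2 * (r + 1)) with hδ'
      have hδ'pos : 0 < δ' := by rw [hδ']; positivity
      have hev : ∀ᶠ t in nhds t₀, ∀ i j : Fin (r + 1), ‖R t i j - R t₀ i j‖ < δ' := by
        rw [Filter.eventually_all]
        intro i
        rw [Filter.eventually_all]
        intro j
        have h2 := Metric.tendsto_nhds.mp (hRcont i j t₀ ht₀mem) δ' hδ'pos
        simpa [dist_eq_norm] using h2
      obtain ⟨δ, hδpos, hδball⟩ := Metric.eventually_nhds_iff.mp hev
      set t1 : ℝ := min c (t₀ + δ / 2) with ht1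
      have ht₀t1 : t₀ < t1 := lt_min ht₀lt (by linarith)
      have ht1Icc : t1 ∈ Set.Icc (0 : ℝ) c :=
        ⟨le_trans ht₀mem.1 (le_of_lt ht₀t1), min_le_left _ _⟩
      have hdist : dist t1 t₀ < δ := by
        rw [Real.dist_eq, abs_lt]
        have := min_le_right c (t₀ + δ / 2)
        constructor <;> linarith [ht₀t1]
      have hclose := hδball hdist
      have hPSDt1 : (R t1).PosSemidef := by
        refine Matrix.PosSemidef.of_dotProduct_mulVec_nonneg (hherm _) fun x => ?_
        rw [herm_quad_real (hherm _) x, Complex.zero_le_real]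
        have hq := hquad x
        have hbd := quad_diff_bound (R t₀) (R t1) x (d := δ')
          (fun i j => by rw [norm_sub_rev]; exact le_of_lt (hclose i j))
        have hcs := sq_sum_norm_le x
        have hQ0 : 0 ≤ ∑ i, ‖x i‖ ^ 2 := Finset.sum_nonneg fun i _ => sq_nonneg _
        have hmono : δ' * (∑ i, ‖x i‖) ^ 2 ≤ δ' * ((r + 1 : ℝ) * ∑ i, ‖x i‖ ^ 2) := by
          apply mul_le_mul_of_nonneg_left _ (le_of_lt hδ'pos)
          exact_mod_cast hcs
        have heq : δ' * ((r + 1 : ℝ) * ∑ i, ‖x i‖ ^ 2) = (ε / 2) * ∑ i, ‖x i‖ ^ 2 := by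
          rw [hδ']
          field_simp
        have hQ2 : 0 ≤ ε / 2 * ∑ i, ‖x i‖ ^ 2 := mul_nonneg (by linarith) hQ0
        linarith
      exact absurd (le_csSup hTbdd ⟨ht1Icc, hPSDt1⟩) (not_le.mpr ht₀t1)
    have hspos₀ : ∀ i j : Fin (r + 1), (0 : ℝ) < auxs a b t₀ i j :=
      auxs_pos a b ht₀mem.1 (lt_of_le_of_lt ht₀mem.2 hclt)
    refine ⟨2, two_pos, ![R t₀, auxW a b t₀ * (auxW a b t₀)ᴴ], ?_, ?_⟩
    · intro i
      fin_cases i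
      · refine ⟨⟨hPSDt₀, hdiagR t₀⟩, ?_⟩
        show (R t₀).rank ≤ r
        have := rank_lt_of_det_eq_zero (hherm t₀) hdet₀ (Nat.succ_pos r)
        omega
      · refine ⟨⟨Matrix.posSemidef_self_mul_conjTranspose _, fun i => ?_⟩, ?_⟩
        · show (auxW a b t₀ * (auxW a b t₀)ᴴ) i i = 1
          rw [auxS_apply hab, auxs_diag]
          simp
        · show (auxW a b t₀ * (auxW a b t₀)ᴴ).rank ≤ r
          calc (auxW a b t₀ * (auxW a b t₀)ᴴ).rank
              ≤ (auxW a b t₀).rank := Matrix.rank_mul_le_left _ _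
            _ ≤ Fintype.card (Fin 2) := Matrix.rank_le_card_width _
            _ = 2 := Fintype.card_fin 2
            _ ≤ r := hr
    · intro i j
      rw [Fin.prod_univ_two]
      simp only [Matrix.cons_val_zero, Matrix.cons_val_one, Matrix.head_cons]
      rw [auxS_apply hab]
      simp only [hR]
      rw [div_mul_cancel₀]
      exact_mod_cast (hspos₀ i j).ne'

end Main
end

section
/- Every extreme point of the convex set of n×n correlation matrices has rank at most ⌊√n⌋; consequently, every extreme point of Corr(ℂ^{2r+1}) is r-decomposable for r ≥ 2. -/
open scoped ComplexOrder ComplexInnerProductSpace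

open Matrix Module in
noncomputable def Fmap {n k : ℕ} (B : Matrix (Fin k) (Fin n) ℂ) :
    Matrix (Fin k) (Fin k) ℂ →ₗ[ℝ] (Fin n → ℝ) × (Fin k → Fin k → ℝ) where
  toFun M := (fun a => ((Bᴴ * (M + Mᴴ) * B) a a).re,
    fun i j => if i < j then ((M - Mᴴ) i j).re else ((M - Mᴴ) i j).im)
  map_add' M N := by
    have h : ∀ X Y : Matrix (Fin k) (Fin k) ℂ, Bᴴ * (X + Y) * B = Bᴴ * X * B + Bᴴ * Y * B := by
      intros; rw [Matrix.mul_add, Matrix.add_mul]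
    refine Prod.ext (funext fun a => ?_) (funext fun i => funext fun j => ?_)
    · simp only [conjTranspose_add, add_add_add_comm, h, Matrix.add_apply, Complex.add_re,
        Pi.add_apply, Prod.fst_add]
    · simp only [conjTranspose_add, add_sub_add_comm, Matrix.add_apply, Matrix.sub_apply,
        Prod.snd_add, Pi.add_apply]
      by_cases hij : i < j <;> simp [hij, Matrix.sub_apply]
  map_smul' r M := by
    have hs : ((r : ℝ) • M)ᴴ = r • Mᴴ := by
      rw [conjTranspose_smul, star_trivial]
    have h : ∀ X : Matrix (Fin k) (Fin k) ℂ, Bᴴ * (r • X) * B = r • (Bᴴ * X * B) := by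
      intro X; rw [Matrix.mul_smul, Matrix.smul_mul]
    refine Prod.ext (funext fun a => ?_) (funext fun i => funext fun j => ?_)
    · simp only [hs, ← smul_add, h, Matrix.smul_apply, RingHom.id_apply,
        Prod.smul_fst, Pi.smul_apply, Complex.real_smul, smul_eq_mul, Complex.mul_re,
        Complex.ofReal_re, Complex.ofReal_im]
      ring
    · simp only [hs, ← smul_sub, Matrix.smul_apply, RingHom.id_apply, Prod.smul_snd,
        Pi.smul_apply, Complex.real_smul, smul_eq_mul, Matrix.sub_apply]
      by_cases hij : i < j <;>
        simp [hij, Complex.mul_re, Complex.mul_im] <;> ring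


open Matrix Module in
lemma exists_herm {n k : ℕ} (B : Matrix (Fin k) (Fin n) ℂ) (h : n < k ^ 2) :
    ∃ A : Matrix (Fin k) (Fin k) ℂ, A ≠ 0 ∧ Aᴴ = A ∧ ∀ a, (Bᴴ * A * B) a a = 0 := by
  have hdom : finrank ℝ (Matrix (Fin k) (Fin k) ℂ) = 2 * k ^ 2 := by
    rw [finrank_matrix, Complex.finrank_real_complex, Fintype.card_fin]
    ring
  have hcod : finrank ℝ ((Fin n → ℝ) × (Fin k → Fin k → ℝ)) = n + k ^ 2 := by
    rw [Module.finrank_prod]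
    simp [Module.finrank_pi_fintype, Module.finrank_fintype_fun_eq_card, finrank_self, sq]
  have hni : ¬ Function.Injective (Fmap B) := by
    intro hinj
    have := LinearMap.finrank_le_finrank_of_injective hinj
    rw [hdom, hcod] at this
    omega
  rw [injective_iff_map_eq_zero] at hni
  push_neg at hni
  obtain ⟨M, hM0, hMne⟩ := hni
  have h2 : ∀ i j, (if i < j then ((M - Mᴴ) i j).re else ((M - Mᴴ) i j).im) = 0 := by
    intro i j
    exact congrFun (congrFun (congrArg Prod.snd hM0) i) j
  have h1 : ∀ a, ((Bᴴ * (M + Mᴴ) * B) a a).re = 0 := fun a =>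
    congrFun (congrArg Prod.fst hM0) a
  have hre' : ∀ i j, i < j → ((M - Mᴴ) i j).re = 0 := by
    intro i j hij; simpa [hij] using h2 i j
  have him' : ∀ i j, ¬ i < j → ((M - Mᴴ) i j).im = 0 := by
    intro i j hij; simpa [hij] using h2 i j
  have hconj : ∀ i j, (M - Mᴴ) j i = -(starRingEnd ℂ) ((M - Mᴴ) i j) := by
    intro i j
    have hsk : (M - Mᴴ)ᴴ = -(M - Mᴴ) := by
      rw [conjTranspose_sub, conjTranspose_conjTranspose]; abel
    have h3 := congrFun (congrFun hsk j) i
    simp only [conjTranspose_apply, Matrix.neg_apply] at h3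
    rw [show (starRingEnd ℂ) ((M - Mᴴ) i j) = star ((M - Mᴴ) i j) from rfl, h3, neg_neg]
  have hherm : Mᴴ = M := by
    have hS : M - Mᴴ = 0 := by
      ext i j
      show (M - Mᴴ) i j = 0
      rcases lt_trichotomy i j with hlt | heq | hgt
      · refine Complex.ext (by simpa using hre' i j hlt) ?_
        have h4 := him' j i (not_lt_of_gt hlt)
        rw [hconj i j] at h4
        simp only [Complex.neg_im, Complex.conj_im, neg_neg] at h4
        simpa using h4
      · subst heq
        refine Complex.ext ?_ (by simpa using him' i i (lt_irrefl i))
        have h4 := congrArg Complex.re (hconj i i)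
        simp only [Complex.neg_re, Complex.conj_re] at h4
        simpa using by linarith
      · refine Complex.ext ?_ (by simpa using him' i j (not_lt_of_gt hgt))
        have h4 := hre' j i hgt
        simp only [Matrix.sub_apply, conjTranspose_apply, Complex.sub_re, Complex.star_def,
          Complex.conj_re] at h4
        simp only [Matrix.sub_apply, conjTranspose_apply, Complex.sub_re, Complex.star_def,
          Complex.conj_re, Complex.zero_re]
        linarith
    exact (sub_eq_zero.mp hS).symm
  refine ⟨M, hMne, hherm, fun a => ?_⟩
  have hMM : M + Mᴴ = M + M := by rw [hherm]
  rw [hMM] at h1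
  have hre : ((Bᴴ * M * B) a a).re = 0 := by
    have h5 := h1 a
    rw [Matrix.mul_add, Matrix.add_mul] at h5
    simp only [Matrix.add_apply, Complex.add_re] at h5
    linarith
  have hZ : (Bᴴ * M * B)ᴴ = Bᴴ * M * B := by
    rw [conjTranspose_mul, conjTranspose_mul, conjTranspose_conjTranspose, hherm, Matrix.mul_assoc]
  have him : ((Bᴴ * M * B) a a).im = 0 := by
    have h6 := congrFun (congrFun hZ a) a
    simp only [conjTranspose_apply] at h6
    have h7 := congrArg Complex.im h6
    simp only [Complex.star_def, Complex.conj_im] at h7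
    linarith
  exact Complex.ext hre him

open Matrix Module in
lemma key_lemma {n k : ℕ} (B : Matrix (Fin k) (Fin n) ℂ)
    (hB : ∀ C : Matrix (Fin k) (Fin k) ℂ, Bᴴ * C * B = 0 → C = 0)
    (hext : Bᴴ * B ∈ Set.extremePoints ℝ {Q : Matrix (Fin n) (Fin n) ℂ | IsCorrMat Q}) :
    k ^ 2 ≤ n := by
  by_contra hn
  push_neg at hn
  obtain ⟨A, hA0, hAh, hdiag⟩ := exists_herm B hn
  set c : ℝ := (∑ i, ∑ j, ‖A i j‖) + 1 with hc_def
  have hsum_nonneg : 0 ≤ ∑ i, ∑ j, ‖A i j‖ :=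
    Finset.sum_nonneg fun i _ => Finset.sum_nonneg fun j _ => norm_nonneg _
  have hc : 0 < c := by positivity
  have hq_eq : ∀ x : Fin k → ℂ, star x ⬝ᵥ (A *ᵥ x)
      = ∑ i, ∑ j, (starRingEnd ℂ) (x i) * A i j * x j := by
    intro x
    simp only [dotProduct, mulVec, Pi.star_apply, Finset.mul_sum, dotProduct]
    refine Finset.sum_congr rfl fun i _ => Finset.sum_congr rfl fun j _ => ?_
    simp [Complex.star_def]; ring
  have him : ∀ x : Fin k → ℂ, (star x ⬝ᵥ (A *ᵥ x)).im = 0 := by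
    intro x
    rw [← Complex.conj_eq_iff_im, hq_eq, map_sum, Finset.sum_comm]
    refine Finset.sum_congr rfl fun i _ => ?_
    rw [map_sum]
    refine Finset.sum_congr rfl fun j _ => ?_
    have hA : (starRingEnd ℂ) (A i j) = A j i := by
      have := congrFun (congrFun hAh j) i
      rw [← this]; rfl
    simp only [_root_.map_mul, Complex.conj_conj]
    rw [hA]; ring
  have hbound : ∀ x : Fin k → ℂ,
      ‖star x ⬝ᵥ (A *ᵥ x)‖ ≤ (c - 1) * ∑ i, Complex.normSq (x i) := by
    intro x
    rw [hq_eq]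
    set T := ∑ i, Complex.normSq (x i) with hT_def
    have hT0 : 0 ≤ T := Finset.sum_nonneg fun i _ => Complex.normSq_nonneg _
    have hterm : ∀ i, Complex.normSq (x i) ≤ T :=
      fun i => Finset.single_le_sum (fun j _ => Complex.normSq_nonneg (x j)) (Finset.mem_univ i)
    calc ‖∑ i, ∑ j, (starRingEnd ℂ) (x i) * A i j * x j‖
        ≤ ∑ i, ‖∑ j, (starRingEnd ℂ) (x i) * A i j * x j‖ :=
          norm_sum_le _ _
      _ ≤ ∑ i, ∑ j, ‖(starRingEnd ℂ) (x i) * A i j * x j‖ :=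
          Finset.sum_le_sum fun i _ => norm_sum_le _ _
      _ ≤ ∑ i, ∑ j, ‖A i j‖ * T := by
          refine Finset.sum_le_sum fun i _ => Finset.sum_le_sum fun j _ => ?_
          rw [norm_mul, norm_mul, Complex.norm_conj]
          have h1 : ‖x i‖ * ‖x j‖ ≤ T := by
            have e1 : ‖x i‖ ^ 2 ≤ T := by rw [Complex.sq_norm]; exact hterm i
            have e2 : ‖x j‖ ^ 2 ≤ T := by rw [Complex.sq_norm]; exact hterm j
            nlinarith [norm_nonneg (x i), norm_nonneg (x j)]
          calc ‖x i‖ * ‖A i j‖ * ‖x j‖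
              = ‖A i j‖ * (‖x i‖ * ‖x j‖) := by ring
            _ ≤ ‖A i j‖ * T :=
                mul_le_mul_of_nonneg_left h1 (norm_nonneg _)
      _ = (c - 1) * T := by
          simp only [← Finset.sum_mul]
          rw [hc_def]; ring
  -- star x ⬝ᵥ x
  have hxx : ∀ x : Fin k → ℂ, star x ⬝ᵥ x = ((∑ i, Complex.normSq (x i) : ℝ) : ℂ) := by
    intro x
    push_cast
    simp only [dotProduct, Pi.star_apply, Complex.star_def]
    exact Finset.sum_congr rfl fun i _ => by rw [mul_comm, Complex.mul_conj]
  -- positive semidefiniteness of 1 ± c⁻¹ • A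
  have hpsd : ∀ ε : ℝ, ε = 1 ∨ ε = -1 →
      Matrix.PosSemidef (1 + ((ε * c⁻¹ : ℝ) : ℂ) • A) := by
    intro ε hε
    have hε1 : |ε| = 1 := by rcases hε with h | h <;> simp [h]
    refine Matrix.posSemidef_iff_dotProduct_mulVec.mpr ⟨?_, ?_⟩
    · show (1 + ((ε * c⁻¹ : ℝ) : ℂ) • A)ᴴ = _
      rw [conjTranspose_add, conjTranspose_one, conjTranspose_smul, hAh, Complex.star_def,
        Complex.conj_ofReal]
    · intro x
      rw [add_mulVec, one_mulVec, dotProduct_add, smul_mulVec, dotProduct_smul, hxx]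
      set T := ∑ i, Complex.normSq (x i) with hT_def
      have hT0 : 0 ≤ T := Finset.sum_nonneg fun i _ => Complex.normSq_nonneg _
      set q := star x ⬝ᵥ (A *ᵥ x) with hq_def
      have hqre : |q.re| ≤ (c - 1) * T := by
        refine le_trans ?_ (hbound x)
        exact Complex.abs_re_le_norm q
      rw [Complex.le_def]
      constructor
      · simp only [Complex.add_re, Complex.ofReal_re, smul_eq_mul, Complex.mul_re,
          Complex.ofReal_im, Complex.zero_re, zero_mul, sub_zero]
        have hcinv : 0 ≤ c⁻¹ := inv_nonneg.mpr hc.le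
        have hci : c * c⁻¹ = 1 := mul_inv_cancel₀ (ne_of_gt hc)
        have habs : |ε * c⁻¹ * q.re| ≤ c⁻¹ * ((c - 1) * T) := by
          rw [abs_mul, abs_mul, hε1, one_mul, abs_of_nonneg hcinv]
          exact mul_le_mul_of_nonneg_left hqre hcinv
        have h2 : c⁻¹ * ((c - 1) * T) ≤ T := by nlinarith
        have h3 := neg_le_of_abs_le habs
        linarith
      · simp only [Complex.add_im, Complex.ofReal_im, smul_eq_mul, Complex.mul_im,
          Complex.ofReal_re, Complex.zero_im, zero_mul, add_zero, mul_zero, zero_add]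
        have h8 : q.im = 0 := him x
        rw [h8, mul_zero]
  have hp := hpsd 1 (Or.inl rfl)
  have hm := hpsd (-1) (Or.inr rfl)
  set s : ℂ := ((1 * c⁻¹ : ℝ) : ℂ) with hs_def
  set s' : ℂ := ((-1 * c⁻¹ : ℝ) : ℂ) with hs'_def
  set Qp : Matrix (Fin n) (Fin n) ℂ := Bᴴ * (1 + s • A) * B with hQp_def
  set Qm : Matrix (Fin n) (Fin n) ℂ := Bᴴ * (1 + s' • A) * B with hQm_def
  have hQp : Qp = Bᴴ * B + s • (Bᴴ * A * B) := by
    rw [hQp_def, Matrix.mul_add, Matrix.add_mul, Matrix.mul_one, Matrix.mul_smul,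
      Matrix.smul_mul]
  have hQm : Qm = Bᴴ * B + s' • (Bᴴ * A * B) := by
    rw [hQm_def, Matrix.mul_add, Matrix.add_mul, Matrix.mul_one, Matrix.mul_smul,
      Matrix.smul_mul]
  have hP1 : ∀ a, (Bᴴ * B) a a = 1 := (hext.1 : IsCorrMat (Bᴴ * B)).2
  have hQpmem : Qp ∈ {Q : Matrix (Fin n) (Fin n) ℂ | IsCorrMat Q} := by
    refine ⟨hp.conjTranspose_mul_mul_same B, fun a => ?_⟩
    rw [hQp]
    simp [Matrix.add_apply, Matrix.smul_apply, hdiag a, hP1 a]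
  have hQmmem : Qm ∈ {Q : Matrix (Fin n) (Fin n) ℂ | IsCorrMat Q} := by
    refine ⟨hm.conjTranspose_mul_mul_same B, fun a => ?_⟩
    rw [hQm]
    simp [Matrix.add_apply, Matrix.smul_apply, hdiag a, hP1 a]
  have hseg : Bᴴ * B ∈ openSegment ℝ Qp Qm := by
    refine ⟨1/2, 1/2, by norm_num, by norm_num, by norm_num, ?_⟩
    rw [hQp, hQm]
    ext a b
    simp only [Matrix.add_apply, Matrix.smul_apply, Pi.smul_apply, Complex.real_smul,
      hs_def, hs'_def, smul_eq_mul]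
    push_cast
    ring
  obtain ⟨hQpe, _⟩ := (mem_extremePoints.mp hext).2 _ hQpmem _ hQmmem hseg
  rw [hQp] at hQpe
  have hz : s • (Bᴴ * A * B) = 0 := by
    have := congrArg (fun X => X - Bᴴ * B) hQpe
    simpa [add_sub_cancel_left] using this
  have hs0 : s ≠ 0 := by
    rw [hs_def]
    simp only [one_mul, ne_eq, Complex.ofReal_eq_zero]
    exact inv_ne_zero (ne_of_gt hc)
  have : Bᴴ * A * B = 0 := by
    rcases smul_eq_zero.mp hz with h | h
    · exact absurd h hs0
    · exact h
  exact hA0 (hB A this)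

open Matrix Module in
lemma part1 {n : ℕ} (P : Matrix (Fin n) (Fin n) ℂ)
    (hext : P ∈ Set.extremePoints ℝ {Q : Matrix (Fin n) (Fin n) ℂ | IsCorrMat Q}) :
    P.rank ≤ Nat.sqrt n := by
  have hP : IsCorrMat P := hext.1
  have hpsd := hP.1
  have hherm : P.IsHermitian := hpsd.1
  set μ : Fin n → ℝ := hherm.eigenvalues with hμ
  set U : Matrix (Fin n) (Fin n) ℂ := (hherm.eigenvectorUnitary : Matrix (Fin n) (Fin n) ℂ)
    with hU
  have hμ0 : ∀ i, 0 ≤ μ i := fun i => hpsd.eigenvalues_nonneg i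
  set k := Fintype.card {i // μ i ≠ 0} with hk
  let e : Fin k ≃ {i // μ i ≠ 0} := (Fintype.equivFin _).symm
  set B : Matrix (Fin k) (Fin n) ℂ :=
    fun i a => ((Real.sqrt (μ (e i)) : ℝ) : ℂ) * (starRingEnd ℂ) (U a (e i)) with hB
  have hsq : ∀ i : Fin k,
      ((Real.sqrt (μ (e i)) : ℝ) : ℂ) * ((Real.sqrt (μ (e i)) : ℝ) : ℂ) = ((μ (e i) : ℝ) : ℂ) := by
    intro i
    rw [← Complex.ofReal_mul, Real.mul_self_sqrt (hμ0 _)]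
  have hUU : (star U) * U = 1 := by
    rw [hU]
    exact Unitary.coe_star_mul_self hherm.eigenvectorUnitary
  have hUU' : ∀ p q : Fin n, (∑ a, (starRingEnd ℂ) (U a p) * U a q) = if p = q then 1 else 0 := by
    intro p q
    have := congrFun (congrFun hUU p) q
    rw [Matrix.mul_apply] at this
    simp only [Matrix.star_apply, Complex.star_def] at this
    rw [this, Matrix.one_apply]
  -- B^H B = P
  have hBB : Bᴴ * B = P := by
    have hPab : ∀ a b, P a b = ∑ j, ((μ j : ℝ) : ℂ) * (U a j * (starRingEnd ℂ) (U b j)) := by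
      intro a b
      conv_lhs => rw [hherm.spectral_theorem, Unitary.conjStarAlgAut_apply]
      rw [Matrix.mul_apply]
      refine Finset.sum_congr rfl fun j _ => ?_
      rw [Matrix.mul_diagonal]
      simp only [Matrix.star_apply, Complex.star_def, Function.comp_apply]
      rw [show (RCLike.ofReal (μ j) : ℂ) = ((μ j : ℝ) : ℂ) from rfl]
      ring
    ext a b
    rw [Matrix.mul_apply, hPab]
    have hvanish : ∀ j ∈ Finset.univ,
        ((μ j : ℝ) : ℂ) * (U a j * (starRingEnd ℂ) (U b j)) ≠ 0 → μ j ≠ 0 := by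
      intro j _ hne h0
      apply hne
      rw [h0]
      simp
    rw [← Finset.sum_filter_of_ne hvanish]
    rw [Finset.sum_subtype (Finset.univ.filter fun j => μ j ≠ 0)
      (p := fun j => μ j ≠ 0) (by simp)
      (fun j => ((μ j : ℝ) : ℂ) * (U a j * (starRingEnd ℂ) (U b j)))]
    rw [← Equiv.sum_comp e (fun j : {i // μ i ≠ 0} =>
      ((μ (j : Fin n) : ℝ) : ℂ) * (U a j * (starRingEnd ℂ) (U b j)))]
    refine Finset.sum_congr rfl fun i _ => ?_
    simp only [conjTranspose_apply, Matrix.star_apply]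
    rw [hB]
    simp only [Complex.star_def, _root_.map_mul, Complex.conj_conj, Complex.conj_ofReal]
    rw [← hsq i]
    ring
  -- B has full row rank
  have hBBH : B * Bᴴ = Matrix.diagonal (fun i : Fin k => ((μ (e i) : ℝ) : ℂ)) := by
    ext i j
    rw [Matrix.mul_apply, Matrix.diagonal_apply]
    simp only [conjTranspose_apply]
    simp only [conjTranspose_apply, Matrix.star_apply, hB, Complex.star_def, _root_.map_mul,
      Complex.conj_conj, Complex.conj_ofReal]
    have : ∀ a, ((Real.sqrt (μ (e i)) : ℝ) : ℂ) * (starRingEnd ℂ) (U a (e i)) *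
        (((Real.sqrt (μ (e j)) : ℝ) : ℂ) * U a (e j))
        = (((Real.sqrt (μ (e i)) : ℝ) : ℂ) * ((Real.sqrt (μ (e j)) : ℝ) : ℂ)) *
          ((starRingEnd ℂ) (U a (e i)) * U a (e j)) := fun a => by ring
    rw [Finset.sum_congr rfl fun a _ => this a, ← Finset.mul_sum, hUU']
    by_cases hij : i = j
    · subst hij
      simp [hsq i]
    · have : (e i : Fin n) ≠ (e j : Fin n) := by
        intro hc
        exact hij (e.injective (Subtype.ext hc))
      simp [this, hij]
  have hBmain : ∀ C : Matrix (Fin k) (Fin k) ℂ, Bᴴ * C * B = 0 → C = 0 := by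
    intro C hC
    have h0 : (B * Bᴴ) * C * (B * Bᴴ) = 0 := by
      have : (B * Bᴴ) * C * (B * Bᴴ) = B * (Bᴴ * C * B) * Bᴴ := by
        simp only [Matrix.mul_assoc]
      rw [this, hC, Matrix.mul_zero, Matrix.zero_mul]
    rw [hBBH] at h0
    ext i j
    have h1 := congrFun (congrFun h0 i) j
    rw [Matrix.mul_diagonal, Matrix.diagonal_mul] at h1
    simp only [Matrix.zero_apply] at h1 ⊢
    have hμi : ((μ (e i) : ℝ) : ℂ) ≠ 0 := Complex.ofReal_ne_zero.mpr (e i).prop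
    have hμj : ((μ (e j) : ℝ) : ℂ) ≠ 0 := Complex.ofReal_ne_zero.mpr (e j).prop
    rcases mul_eq_zero.mp h1 with h2 | h2
    · rcases mul_eq_zero.mp h2 with h3 | h3
      · exact absurd h3 hμi
      · exact h3
    · exact absurd h2 hμj
  have hk2 : k ^ 2 ≤ n := key_lemma B hBmain (by rw [hBB]; exact hext)
  have hrank : P.rank = k := hherm.rank_eq_card_non_zero_eigs
  rw [hrank]
  exact Nat.le_sqrt'.mpr hk2


/-- Every extreme point of the set of `n × n` correlation matrices has rank at most
`⌊√n⌋`; consequently, for `r ≥ 2` every extreme point of `Corr(ℂ^{2r+1})` is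
`r`-decomposable. -/
theorem stmt15 :
    (∀ (n : ℕ) (P : Matrix (Fin n) (Fin n) ℂ),
      P ∈ Set.extremePoints ℝ {Q : Matrix (Fin n) (Fin n) ℂ | IsCorrMat Q} →
      P.rank ≤ Nat.sqrt n) ∧
    ∀ r : ℕ, 2 ≤ r → ∀ P : Matrix (Fin (2 * r + 1)) (Fin (2 * r + 1)) ℂ,
      P ∈ Set.extremePoints ℝ
        {Q : Matrix (Fin (2 * r + 1)) (Fin (2 * r + 1)) ℂ | IsCorrMat Q} →
      IsDecomposable r P := by
  refine ⟨fun n P hext => part1 P hext, ?_⟩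
  intro r hr P hext
  have h1 := part1 P hext
  have hcorr : IsCorrMat P := hext.1
  have hrank : P.rank ≤ r := by
    refine le_trans h1 ?_
    have h2 : Nat.sqrt (2 * r + 1) < r + 1 := Nat.sqrt_lt'.mpr (by nlinarith)
    omega
  exact ⟨1, Nat.one_pos, fun _ => P, fun i => ⟨hcorr, hrank⟩, fun a b => by simp⟩
end

section
/- Let p ∈ (0,1) and let P be the 3×3 matrix with ones on the diagonal, P(1,2) = e^{iφ₁}p, P(1,3) = e^{iφ₂}√((1+p)/2), P(2,3) = e^{iφ₃}√((1+p)/2) (and conjugate entries below the diagonal), for phases φ₁, φ₂, φ₃ ∈ [0, 2π). Then det(P) = p(1+p)(−1 + cos(φ₁ − φ₂ + φ₃)) ≤ 0, and if P is positive semidefinite then det(P) = 0 and rank(P) = 2. -/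
open scoped ComplexOrder

open Complex in
/-- The determinant of the displayed 3×3 correlation-type matrix equals
`p(1+p)(-1 + cos(φ₁ - φ₂ + φ₃)) ≤ 0`; if the matrix is positive semidefinite then its
determinant vanishes and it has rank 2. -/
theorem stmt17 (p : ℝ) (hp0 : 0 < p) (hp1 : p < 1)
    (φ₁ φ₂ φ₃ : ℝ) (h₁ : 0 ≤ φ₁ ∧ φ₁ < 2 * Real.pi)
    (h₂ : 0 ≤ φ₂ ∧ φ₂ < 2 * Real.pi) (h₃ : 0 ≤ φ₃ ∧ φ₃ < 2 * Real.pi)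
    (P : Matrix (Fin 3) (Fin 3) ℂ)
    (hP : P = !![1, exp (φ₁ * I) * p, exp (φ₂ * I) * (Real.sqrt ((1 + p) / 2) : ℝ);
      exp (-(φ₁ * I)) * p, 1, exp (φ₃ * I) * (Real.sqrt ((1 + p) / 2) : ℝ);
      exp (-(φ₂ * I)) * (Real.sqrt ((1 + p) / 2) : ℝ),
        exp (-(φ₃ * I)) * (Real.sqrt ((1 + p) / 2) : ℝ), 1]) :
    P.det = ((p * (1 + p) * (-1 + Real.cos (φ₁ - φ₂ + φ₃)) : ℝ) : ℂ) ∧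
    (p * (1 + p) * (-1 + Real.cos (φ₁ - φ₂ + φ₃)) : ℝ) ≤ 0 ∧
    (P.PosSemidef → P.det = 0 ∧ P.rank = 2) := by
  have hdet : P.det = ((p * (1 + p) * (-1 + Real.cos (φ₁ - φ₂ + φ₃)) : ℝ) : ℂ) := by
    subst hP
    rw [Matrix.det_fin_three]
    norm_num [Matrix.cons_val_zero, Matrix.cons_val_one, Matrix.cons_val_two, Matrix.head_cons, Matrix.tail_cons]
    have hs2 : ((Real.sqrt (1 + p) : ℂ) / (Real.sqrt 2 : ℂ)) ^ 2 = ((1 : ℂ) + p) / 2 := by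
      rw [div_pow, ← Complex.ofReal_pow, ← Complex.ofReal_pow,
        Real.sq_sqrt (by linarith), Real.sq_sqrt (by norm_num)]
      push_cast; ring
    have hc : Complex.cos ((φ₁ : ℂ) - φ₂ + φ₃)
        = (exp (((φ₁ : ℂ) - φ₂ + φ₃) * I) + exp (-(((φ₁ : ℂ) - φ₂ + φ₃) * I))) / 2 := by
      rw [Complex.cos]; ring_nf
    rw [hc]
    have m1 : cexp ((φ₁ : ℂ) * I) * cexp (-((φ₁ : ℂ) * I)) = 1 := by
      rw [← Complex.exp_add]; ring_nf; exact Complex.exp_zero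
    have m2 : cexp ((φ₂ : ℂ) * I) * cexp (-((φ₂ : ℂ) * I)) = 1 := by
      rw [← Complex.exp_add]; ring_nf; exact Complex.exp_zero
    have m3 : cexp ((φ₃ : ℂ) * I) * cexp (-((φ₃ : ℂ) * I)) = 1 := by
      rw [← Complex.exp_add]; ring_nf; exact Complex.exp_zero
    have m4 : cexp ((φ₁ : ℂ) * I) * cexp ((φ₃ : ℂ) * I) * cexp (-((φ₂ : ℂ) * I))
        = cexp (((φ₁ : ℂ) - φ₂ + φ₃) * I) := by
      rw [← Complex.exp_add, ← Complex.exp_add]; ring_nf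
    have m5 : cexp ((φ₂ : ℂ) * I) * cexp (-((φ₁ : ℂ) * I)) * cexp (-((φ₃ : ℂ) * I))
        = cexp (-(((φ₁ : ℂ) - φ₂ + φ₃) * I)) := by
      rw [← Complex.exp_add, ← Complex.exp_add]; ring_nf
    set s : ℂ := (Real.sqrt (1 + p) : ℂ) / (Real.sqrt 2 : ℂ) with hsdef
    set X := cexp (((φ₁ : ℂ) - φ₂ + φ₃) * I)
    set Y := cexp (-(((φ₁ : ℂ) - φ₂ + φ₃) * I))
    linear_combination (-(s^2)) * m2 + (-(s^2)) * m3 + (-((p:ℂ)^2)) * m1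
      + ((p:ℂ) * s^2) * m4 + ((p:ℂ) * s^2) * m5 + (-2 + (p:ℂ) * (X + Y)) * hs2
  have hle : (p * (1 + p) * (-1 + Real.cos (φ₁ - φ₂ + φ₃)) : ℝ) ≤ 0 := by
    nlinarith [Real.cos_le_one (φ₁ - φ₂ + φ₃), mul_pos hp0 (show (0:ℝ) < 1 + p by linarith)]
  refine ⟨hdet, hle, fun hPSD => ?_⟩
  have hH : P.IsHermitian := hPSD.isHermitian
  -- det = 0
  have hprod : P.det = ((∏ i, hH.eigenvalues i : ℝ) : ℂ) := by
    rw [hH.det_eq_prod_eigenvalues]; push_cast; rfl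
  have hreq : (p * (1 + p) * (-1 + Real.cos (φ₁ - φ₂ + φ₃)) : ℝ) = ∏ i, hH.eigenvalues i := by
    have := hdet.symm.trans hprod
    exact_mod_cast this
  have hprod_nonneg : 0 ≤ ∏ i, hH.eigenvalues i :=
    Finset.prod_nonneg fun i _ => hPSD.eigenvalues_nonneg i
  have h0 : (p * (1 + p) * (-1 + Real.cos (φ₁ - φ₂ + φ₃)) : ℝ) = 0 := by
    linarith [hprod_nonneg, hreq.le, hreq.ge]
  have hdet0 : P.det = 0 := by rw [hdet, h0]; norm_num
  refine ⟨hdet0, ?_⟩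
  -- some eigenvalue is zero
  have hzero : ∃ i ∈ Finset.univ, hH.eigenvalues i = 0 := by
    apply Finset.prod_eq_zero_iff.mp
    have : ((∏ i, hH.eigenvalues i : ℝ) : ℂ) = 0 := hprod ▸ hdet0
    exact_mod_cast this
  obtain ⟨i, -, hi⟩ := hzero
  have hrank_lt : P.rank < 3 := by
    rw [hH.rank_eq_card_non_zero_eigs]
    have := Fintype.card_subtype_lt (p := fun j => hH.eigenvalues j ≠ 0) (x := i) (by simpa using hi)
    simpa using this
  -- rank ≥ 2 via the top-left 2×2 submatrix
  have hf : ∀ j : Fin 2, (Fin.castLE (by norm_num) j : Fin 3) = j.castLE (by norm_num) := fun _ => rfl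
  set f : Fin 2 → Fin 3 := Fin.castLE (by norm_num) with hfdef
  have hSdet : (P.submatrix f f).det = ((1 - p ^ 2 : ℝ) : ℂ) := by
    rw [Matrix.det_fin_two]
    subst hP
    have h00 : f 0 = (0 : Fin 3) := rfl
    have h11 : f 1 = (1 : Fin 3) := rfl
    simp only [Matrix.submatrix_apply, h00, h11]
    norm_num [Matrix.cons_val_zero, Matrix.cons_val_one, Matrix.head_cons]
    have m1 : cexp ((φ₁ : ℂ) * I) * cexp (-((φ₁ : ℂ) * I)) = 1 := by
      rw [← Complex.exp_add]; ring_nf; exact Complex.exp_zero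
    push_cast
    linear_combination ((p:ℂ)^2) * m1
  have hSunit : IsUnit (P.submatrix f f) := by
    rw [Matrix.isUnit_iff_isUnit_det, hSdet, isUnit_iff_ne_zero]
    have : (1 - p ^ 2 : ℝ) ≠ 0 := by nlinarith
    exact_mod_cast this
  have hSrank : (P.submatrix f f).rank = 2 := by
    rw [Matrix.rank_of_isUnit _ hSunit]; simp
  have h1 : P.submatrix f f = (P.submatrix f id) * ((1 : Matrix (Fin 3) (Fin 3) ℂ).submatrix (Equiv.refl (Fin 3)) f) := by
    rw [Matrix.mul_submatrix_one]
    rfl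
  have h2 : P.submatrix f id = ((1 : Matrix (Fin 3) (Fin 3) ℂ).submatrix f (Equiv.refl (Fin 3))) * P := by
    rw [Matrix.one_submatrix_mul]
    rfl
  have hge : 2 ≤ P.rank := by
    calc 2 = (P.submatrix f f).rank := hSrank.symm
      _ ≤ (P.submatrix f id).rank := by rw [h1]; exact Matrix.rank_mul_le_left _ _
      _ ≤ P.rank := by rw [h2]; exact Matrix.rank_mul_le_right _ _
  omega
end

section
/- Let p ∈ (−1/2, 1) and let P ∈ Corr(ℂ⁴) be generated by unit vectors v₁, v₂, v₃, v₄ with ⟨v_a, v_b⟩ = p for all distinct a, b ∈ {1,2,3}, and v₄ = α₁(v₁ + v₃) + α₂v₂ for some nonzero complex scalars α₁, α₂. Then P is 2-decomposable; in fact, P = Q₁ ⊙ Q₂ for two correlation matrices Q₁, Q₂ each of rank at most 2. -/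
open scoped ComplexOrder ComplexInnerProductSpace

/-- If `P ∈ Corr(ℂ⁴)` is generated by unit vectors with `⟪v_a, v_b⟫ = p` for distinct
`a, b ∈ {0,1,2}`, `-1/2 < p < 1`, and `v₃ = α₁ (v₀ + v₂) + α₂ v₁` with `α₁, α₂ ≠ 0`,
then `P` is 2-decomposable; in fact, `P` is the Schur product of two correlation
matrices of rank at most 2. -/
theorem stmt18 (s : ℕ) (p : ℝ) (hp1 : -(1 / 2 : ℝ) < p) (hp2 : p < 1)
    (v : Fin 4 → EuclideanSpace ℂ (Fin s)) (hv : ∀ a, ‖v a‖ = 1)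
    (hgram : ∀ a b : Fin 4, a ≠ b → a ≠ 3 → b ≠ 3 → ⟪v a, v b⟫ = (p : ℂ))
    (α₁ α₂ : ℂ) (hα₁ : α₁ ≠ 0) (hα₂ : α₂ ≠ 0)
    (hv4 : v 3 = α₁ • (v 0 + v 2) + α₂ • v 1)
    (P : Matrix (Fin 4) (Fin 4) ℂ) (hP : ∀ a b, P a b = ⟪v a, v b⟫) :
    IsDecomposable 2 P ∧
    ∃ Q₁ Q₂ : Matrix (Fin 4) (Fin 4) ℂ, IsCorrMat Q₁ ∧ Q₁.rank ≤ 2 ∧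
      IsCorrMat Q₂ ∧ Q₂.rank ≤ 2 ∧ P = Matrix.hadamard Q₁ Q₂ := by
  -- inner product values
  have hii : ∀ a, ⟪v a, v a⟫ = (1:ℂ) := by
    intro a; rw [inner_self_eq_norm_sq_to_K, hv a]; norm_num
  have h01 : ⟪v 0, v 1⟫ = (p:ℂ) := hgram 0 1 (by decide) (by decide) (by decide)
  have h02 : ⟪v 0, v 2⟫ = (p:ℂ) := hgram 0 2 (by decide) (by decide) (by decide)
  have h12 : ⟪v 1, v 2⟫ = (p:ℂ) := hgram 1 2 (by decide) (by decide) (by decide)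
  have h10 : ⟪v 1, v 0⟫ = (p:ℂ) := hgram 1 0 (by decide) (by decide) (by decide)
  have h20 : ⟪v 2, v 0⟫ = (p:ℂ) := hgram 2 0 (by decide) (by decide) (by decide)
  have h21 : ⟪v 2, v 1⟫ = (p:ℂ) := hgram 2 1 (by decide) (by decide) (by decide)
  have h03 : ⟪v 0, v 3⟫ = α₁*(1+(p:ℂ)) + α₂*p := by
    rw [hv4]; simp [inner_add_right, inner_smul_right, hii, hv, h01, h02]; ring
  have h13 : ⟪v 1, v 3⟫ = 2*(p:ℂ)*α₁ + α₂ := by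
    rw [hv4]; simp [inner_add_right, inner_smul_right, hii, hv, h10, h12]; ring
  have h23 : ⟪v 2, v 3⟫ = α₁*(1+(p:ℂ)) + α₂*p := by
    rw [hv4]; simp [inner_add_right, inner_smul_right, hii, hv, h20, h21]; ring
  have h30 : ⟪v 3, v 0⟫ = (starRingEnd ℂ) α₁*(1+(p:ℂ)) + (starRingEnd ℂ) α₂*p := by
    rw [hv4]; simp [inner_add_left, inner_smul_left, hii, hv, h10, h20]; ring
  have h31 : ⟪v 3, v 1⟫ = 2*(p:ℂ)*((starRingEnd ℂ) α₁) + (starRingEnd ℂ) α₂ := by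
    rw [hv4]; simp [inner_add_left, inner_smul_left, hii, hv, h01, h21]; ring
  have h32 : ⟪v 3, v 2⟫ = (starRingEnd ℂ) α₁*(1+(p:ℂ)) + (starRingEnd ℂ) α₂*p := by
    rw [hv4]; simp [inner_add_left, inner_smul_left, hii, hv, h02, h12]; ring
  have hnorm : (starRingEnd ℂ) α₁ * α₁ * (2+2*(p:ℂ)) +
      2*(p:ℂ)*((starRingEnd ℂ) α₁ * α₂ + (starRingEnd ℂ) α₂ * α₁) +
      (starRingEnd ℂ) α₂ * α₂ = 1 := by
    have h := hii 3
    rw [hv4] at h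
    simp [inner_add_right, inner_smul_right, inner_add_left, inner_smul_left,
      hii, h01, h02, h12, h10, h20, h21, -inner_self_eq_norm_sq_to_K] at h
    linear_combination h
  -- real constants
  have hp0 : (0:ℝ) < (1 + p)/2 := by linarith
  set y : ℝ := Real.sqrt ((1+p)/2) with hy
  have hy2 : y * y = (1+p)/2 := Real.mul_self_sqrt (le_of_lt hp0)
  have hypos : 0 < y := Real.sqrt_pos.2 hp0
  set x : ℝ := p / y with hx
  have hxy : x * y = p := div_mul_cancel₀ _ (ne_of_gt hypos)
  have hx1 : x < 1 := by nlinarith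
  have hx1' : -1 < x := by nlinarith
  set c : ℝ := Real.sqrt ((1+x)/2) with hc
  set t : ℝ := Real.sqrt ((1-p)/2) with ht
  have hc2 : c * c = (1+x)/2 := Real.mul_self_sqrt (by linarith)
  have ht2 : t * t = (1-p)/2 := Real.mul_self_sqrt (by linarith)
  set d : ℝ := Real.sqrt ((1-x)/2) with hd
  have hd2 : d * d = (1-x)/2 := Real.mul_self_sqrt (by linarith)
  have hCy : (y:ℂ)*(y:ℂ) = (1+(p:ℂ))/2 := by exact_mod_cast congrArg Complex.ofReal hy2
  have hCt : (t:ℂ)*(t:ℂ) = (1-(p:ℂ))/2 := by exact_mod_cast congrArg Complex.ofReal ht2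
  have hCc : (c:ℂ)*(c:ℂ) = (1+(x:ℂ))/2 := by exact_mod_cast congrArg Complex.ofReal hc2
  have hCd : (d:ℂ)*(d:ℂ) = (1-(x:ℂ))/2 := by exact_mod_cast congrArg Complex.ofReal hd2
  have hCxy : (x:ℂ)*(y:ℂ) = (p:ℂ) := by exact_mod_cast congrArg Complex.ofReal hxy
  -- the two rank ≤ 2 factors
  set M₁ : Matrix (Fin 2) (Fin 4) ℂ :=
    !![(c:ℂ), c, c, (2*y*α₁+α₂)*c; (d:ℂ), -d, d, (2*y*α₁-α₂)*d] with hM₁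
  set M₂ : Matrix (Fin 2) (Fin 4) ℂ :=
    !![(y:ℂ), 1, y, 1; (t:ℂ), 0, -t, 0] with hM₂
  set Q₁ : Matrix (Fin 4) (Fin 4) ℂ := Matrix.conjTranspose M₁ * M₁ with hQ₁
  set Q₂ : Matrix (Fin 4) (Fin 4) ℂ := Matrix.conjTranspose M₂ * M₂ with hQ₂
  have e1 : ∀ i j, Q₁ i j = star (M₁ 0 i) * M₁ 0 j + star (M₁ 1 i) * M₁ 1 j := by
    intro i j; rw [hQ₁]; simp [Matrix.mul_apply, Fin.sum_univ_two]
  have e2 : ∀ i j, Q₂ i j = star (M₂ 0 i) * M₂ 0 j + star (M₂ 1 i) * M₂ 1 j := by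
    intro i j; rw [hQ₂]; simp [Matrix.mul_apply, Fin.sum_univ_two]
  have hQ₁psd : Q₁.PosSemidef := Matrix.posSemidef_conjTranspose_mul_self M₁
  have hQ₂psd : Q₂.PosSemidef := Matrix.posSemidef_conjTranspose_mul_self M₂
  have hQ₁rank : Q₁.rank ≤ 2 := by
    rw [hQ₁, Matrix.rank_conjTranspose_mul_self]
    simpa using Matrix.rank_le_card_height M₁
  have hQ₂rank : Q₂.rank ≤ 2 := by
    rw [hQ₂, Matrix.rank_conjTranspose_mul_self]
    simpa using Matrix.rank_le_card_height M₂
  have hQ₁diag : ∀ a, Q₁ a a = 1 := by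
    intro a
    fin_cases a <;> rw [e1] <;> simp [hM₁] <;>
      [linear_combination hCc + hCd;
       linear_combination hCc + hCd;
       linear_combination hCc + hCd;
       linear_combination (2*(y:ℂ)*(starRingEnd ℂ) α₁ + (starRingEnd ℂ) α₂)*(2*(y:ℂ)*α₁+α₂)*hCc
         + (2*(y:ℂ)*(starRingEnd ℂ) α₁ - (starRingEnd ℂ) α₂)*(2*(y:ℂ)*α₁-α₂)*hCd
         + 4*((starRingEnd ℂ) α₁ * α₁)*hCy
         + 2*((starRingEnd ℂ) α₁ * α₂ + (starRingEnd ℂ) α₂ * α₁)*hCxy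
         + hnorm]
  have hQ₂diag : ∀ a, Q₂ a a = 1 := by
    intro a
    fin_cases a <;> rw [e2] <;> simp [hM₂] <;>
      [linear_combination hCy + hCt; linear_combination hCy + hCt]
  have hPQ : P = Matrix.hadamard Q₁ Q₂ := by
    ext a b
    rw [hP, Matrix.hadamard_apply]
    fin_cases a <;> fin_cases b <;>
      rw [e1, e2] <;>
      simp [hM₁, hM₂, hii, hv, h01, h02, h12, h10, h20, h21, h03, h13, h23, h30, h31, h32]
    · linear_combination -(((y:ℂ)*(y:ℂ)+(t:ℂ)*(t:ℂ))*(hCc+hCd) + hCy + hCt)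
    · linear_combination -((y:ℂ)*hCc - (y:ℂ)*hCd + hCxy)
    · linear_combination -(((y:ℂ)*(y:ℂ)-(t:ℂ)*(t:ℂ))*(hCc+hCd) + hCy - hCt)
    · linear_combination -((y:ℂ)*(2*(y:ℂ)*α₁+α₂)*hCc + (y:ℂ)*(2*(y:ℂ)*α₁-α₂)*hCd
        + 2*α₁*hCy + α₂*hCxy)
    · linear_combination -((y:ℂ)*hCc - (y:ℂ)*hCd + hCxy)
    · linear_combination -(hCc + hCd)
    · linear_combination -((y:ℂ)*hCc - (y:ℂ)*hCd + hCxy)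
    · linear_combination -((2*(y:ℂ)*α₁+α₂)*hCc - (2*(y:ℂ)*α₁-α₂)*hCd + 2*α₁*hCxy)
    · linear_combination -(((y:ℂ)*(y:ℂ)-(t:ℂ)*(t:ℂ))*(hCc+hCd) + hCy - hCt)
    · linear_combination -((y:ℂ)*hCc - (y:ℂ)*hCd + hCxy)
    · linear_combination -(((y:ℂ)*(y:ℂ)+(t:ℂ)*(t:ℂ))*(hCc+hCd) + hCy + hCt)
    · linear_combination -((y:ℂ)*(2*(y:ℂ)*α₁+α₂)*hCc + (y:ℂ)*(2*(y:ℂ)*α₁-α₂)*hCd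
        + 2*α₁*hCy + α₂*hCxy)
    · linear_combination -((y:ℂ)*(2*(y:ℂ)*(starRingEnd ℂ) α₁+(starRingEnd ℂ) α₂)*hCc
        + (y:ℂ)*(2*(y:ℂ)*(starRingEnd ℂ) α₁-(starRingEnd ℂ) α₂)*hCd
        + 2*((starRingEnd ℂ) α₁)*hCy + ((starRingEnd ℂ) α₂)*hCxy)
    · linear_combination -((2*(y:ℂ)*(starRingEnd ℂ) α₁+(starRingEnd ℂ) α₂)*hCc
        - (2*(y:ℂ)*(starRingEnd ℂ) α₁-(starRingEnd ℂ) α₂)*hCd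
        + 2*((starRingEnd ℂ) α₁)*hCxy)
    · linear_combination -((y:ℂ)*(2*(y:ℂ)*(starRingEnd ℂ) α₁+(starRingEnd ℂ) α₂)*hCc
        + (y:ℂ)*(2*(y:ℂ)*(starRingEnd ℂ) α₁-(starRingEnd ℂ) α₂)*hCd
        + 2*((starRingEnd ℂ) α₁)*hCy + ((starRingEnd ℂ) α₂)*hCxy)
    · linear_combination -((2*(y:ℂ)*(starRingEnd ℂ) α₁ + (starRingEnd ℂ) α₂)*(2*(y:ℂ)*α₁+α₂)*hCc
            + (2*(y:ℂ)*(starRingEnd ℂ) α₁ - (starRingEnd ℂ) α₂)*(2*(y:ℂ)*α₁-α₂)*hCd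
            + 4*((starRingEnd ℂ) α₁ * α₁)*hCy
            + 2*((starRingEnd ℂ) α₁ * α₂ + (starRingEnd ℂ) α₂ * α₁)*hCxy
            + hnorm)
  refine ⟨⟨2, by norm_num, ![Q₁, Q₂], ?_, ?_⟩,
    Q₁, Q₂, ⟨hQ₁psd, hQ₁diag⟩, hQ₁rank, ⟨hQ₂psd, hQ₂diag⟩, hQ₂rank, hPQ⟩
  · intro i
    fin_cases i
    · exact ⟨⟨hQ₁psd, hQ₁diag⟩, hQ₁rank⟩
    · exact ⟨⟨hQ₂psd, hQ₂diag⟩, hQ₂rank⟩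
  · intro a b
    rw [Fin.prod_univ_two, hPQ]
    simp [Matrix.hadamard_apply]
end

section
/- Let n ≥ 3 and 2 ≤ r ≤ n−1 be integers. If there exists an n×n correlation matrix that is not r-decomposable, then there exists an n×n correlation matrix P that is not r-decomposable and such that no vector in any generating set of unit vectors for P is linearly independent from the remaining vectors of the set. -/
open scoped ComplexOrder ComplexInnerProductSpace

open scoped Matrix

/-- The Gram matrix of a family of vectors. -/
noncomputable def gram {n s : ℕ} (v : Fin n → EuclideanSpace ℂ (Fin s)) :
    Matrix (Fin n) (Fin n) ℂ :=
  Matrix.of fun a b => ⟪v a, v b⟫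

lemma gram_eq_mul {n s : ℕ} (v : Fin n → EuclideanSpace ℂ (Fin s)) :
    gram v = (Matrix.of fun i a => v a i)ᴴ * (Matrix.of fun i a => v a i) := by
  ext a b
  simp [gram, Matrix.mul_apply, Matrix.conjTranspose_apply, PiLp.inner_apply, RCLike.inner_apply]
  exact Finset.sum_congr rfl fun _ _ => mul_comm _ _

lemma gram_posSemidef_s19 {n s : ℕ} (v : Fin n → EuclideanSpace ℂ (Fin s)) :
    (gram v).PosSemidef := by
  rw [gram_eq_mul]; exact Matrix.posSemidef_conjTranspose_mul_self _

lemma gram_rank_le {n s : ℕ} (v : Fin n → EuclideanSpace ℂ (Fin s)) :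
    (gram v).rank ≤ s := by
  rw [gram_eq_mul, Matrix.rank_conjTranspose_mul_self]
  exact (Matrix.rank_le_card_height _).trans (by simp)

lemma gram_rank_s19 {n s : ℕ} (v : Fin n → EuclideanSpace ℂ (Fin s)) :
    (gram v).rank = Module.finrank ℂ (Submodule.span ℂ (Set.range v)) := by
  rw [gram_eq_mul, Matrix.rank_conjTranspose_mul_self, Matrix.rank_eq_finrank_span_cols]
  rw [← LinearEquiv.finrank_map_eq (WithLp.linearEquiv 2 ℂ (Fin s → ℂ))
    (Submodule.span ℂ (Set.range v)), Submodule.map_span]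
  have hset : ⇑(WithLp.linearEquiv 2 ℂ (Fin s → ℂ)) '' Set.range v
      = Set.range (Matrix.of fun i a => v a i)ᵀ := by
    ext x
    constructor
    · rintro ⟨y, ⟨a, rfl⟩, rfl⟩; exact ⟨a, rfl⟩
    · rintro ⟨a, rfl⟩; exact ⟨v a, ⟨a, rfl⟩, rfl⟩
  simp only [LinearEquiv.coe_coe]
  have hset' : Set.range (Matrix.of fun i a => v a i).col
      = ⇑(WithLp.linearEquiv 2 ℂ (Fin s → ℂ)) '' Set.range v := hset.symm
  rw [hset']

lemma IsDecomposable.schur {n r : ℕ} {P P' Q : Matrix (Fin n) (Fin n) ℂ}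
    (hP' : IsDecomposable r P') (hQ : IsCorrMat Q) (hQr : Q.rank ≤ r)
    (hPQ : ∀ a b, P a b = P' a b * Q a b) : IsDecomposable r P := by
  obtain ⟨m, hm, R, hR, hprod⟩ := hP'
  refine ⟨m + 1, Nat.succ_pos _, Fin.snoc R Q, ?_, ?_⟩
  · intro i
    refine Fin.lastCases ?_ ?_ i
    · simpa using ⟨hQ, hQr⟩
    · intro i; simpa using hR i
  · intro a b
    rw [Fin.prod_univ_castSucc]
    simp only [Fin.snoc_castSucc, Fin.snoc_last]
    rw [hPQ, hprod]

lemma exists_Q {n : ℕ} (c : Fin n) (t : ℝ) (ht0 : 0 ≤ t) (ht1 : t ≤ 1) :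
    ∃ Q : Matrix (Fin n) (Fin n) ℂ, Q.PosSemidef ∧ Q.rank ≤ 2 ∧
      (∀ a b : Fin n, Q a b =
        if a = c then (if b = c then 1 else (t:ℂ)) else (if b = c then (t:ℂ) else 1)) := by
  set w : Fin n → EuclideanSpace ℂ (Fin 2) := fun a =>
    if a = c then (WithLp.equiv 2 (Fin 2 → ℂ)).symm ![(t:ℂ), (Real.sqrt (1 - t^2) : ℂ)]
    else (WithLp.equiv 2 (Fin 2 → ℂ)).symm ![1, 0] with hw
  refine ⟨gram w, gram_posSemidef_s19 w, gram_rank_le w, ?_⟩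
  intro a b
  have hsq : (Real.sqrt (1 - t ^ 2)) * (Real.sqrt (1 - t ^ 2)) = 1 - t ^ 2 :=
    Real.mul_self_sqrt (by nlinarith)
  by_cases ha : a = c <;> by_cases hb : b = c <;>
    simp [gram, hw, ha, hb, PiLp.inner_apply, RCLike.inner_apply, Fin.sum_univ_two,
      ← Complex.ofReal_mul, hsq, ← Complex.ofReal_add, ← Complex.ofReal_one]
  push_cast
  ring

/-- If some `n × n` correlation matrix is not `r`-decomposable (`n ≥ 3`,
`2 ≤ r ≤ n - 1`), then there is one, `P`, such that additionally in every generating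
set of unit vectors for `P`, every vector lies in the span of the remaining ones. -/
theorem stmt19 (n r : ℕ) (hn : 3 ≤ n) (hr2 : 2 ≤ r) (hrn : r ≤ n - 1)
    (h : ∃ P : Matrix (Fin n) (Fin n) ℂ, IsCorrMat P ∧ ¬ IsDecomposable r P) :
    ∃ P : Matrix (Fin n) (Fin n) ℂ, IsCorrMat P ∧ ¬ IsDecomposable r P ∧
      ∀ (s : ℕ) (v : Fin n → EuclideanSpace ℂ (Fin s)), (∀ a, ‖v a‖ = 1) →
        (∀ a b, P a b = ⟪v a, v b⟫) →
        ∀ c, v c ∈ Submodule.span ℂ {x | ∃ a, a ≠ c ∧ x = v a} := by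
  classical
  set S : Set ℕ := {k | ∃ P : Matrix (Fin n) (Fin n) ℂ,
    IsCorrMat P ∧ ¬ IsDecomposable r P ∧ P.rank = k} with hSdef
  have hS : S.Nonempty := by
    obtain ⟨P, h1, h2⟩ := h
    exact ⟨P.rank, P, h1, h2, rfl⟩
  obtain ⟨P, hPc, hPd, hPk⟩ := Nat.sInf_mem hS
  refine ⟨P, hPc, hPd, ?_⟩
  intro s v hnorm hgen c
  by_contra hc
  have hPgram : P = gram v := by ext a b; exact hgen a b
  set U : Submodule ℂ (EuclideanSpace ℂ (Fin s)) :=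
    Submodule.span ℂ {x | ∃ a, a ≠ c ∧ x = v a} with hUdef
  have hmemU : ∀ a, a ≠ c → v a ∈ U := fun a ha => Submodule.subset_span ⟨a, ha, rfl⟩
  set u : EuclideanSpace ℂ (Fin s) :=
    (U.orthogonalProjectionOnto (v c) : EuclideanSpace ℂ (Fin s)) with hudef
  have huU : u ∈ U := SetLike.coe_mem _
  have hwU : v c - u ∈ Uᗮ := Submodule.sub_starProjection_mem_orthogonal (K := U) (v c)
  set t : ℝ := ‖u‖ with htdef
  have ht0 : 0 ≤ t := norm_nonneg _
  have hvc1 : ‖v c‖ = 1 := hnorm c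
  have hts : t ^ 2 + ‖v c - u‖ ^ 2 = 1 := by
    have h0 : (⟪u, v c - u⟫ : ℂ) = 0 := Submodule.inner_right_of_mem_orthogonal huU hwU
    have hsum : u + (v c - u) = v c := by abel
    have hn2 := norm_add_sq (𝕜 := ℂ) u (v c - u)
    rw [hsum, hvc1, h0] at hn2
    simpa using hn2.symm
  have ht1 : t ≤ 1 := by nlinarith [sq_nonneg (‖v c - u‖)]
  have hinner : ∀ a, a ≠ c → (⟪v a, v c⟫ : ℂ) = ⟪v a, u⟫ := by
    intro a ha
    have h0 : (⟪v a, v c - u⟫ : ℂ) = 0 := Submodule.inner_right_of_mem_orthogonal (hmemU a ha) hwU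
    rw [inner_sub_right] at h0
    exact sub_eq_zero.mp h0
  obtain ⟨a₀, ha₀⟩ : ∃ a : Fin n, a ≠ c :=
    Fintype.exists_ne_of_one_lt_card (by simp only [Fintype.card_fin]; omega) c
  set newc : EuclideanSpace ℂ (Fin s) := if u = 0 then v a₀ else ((t : ℂ))⁻¹ • u with hnewc
  set v' : Fin n → EuclideanSpace ℂ (Fin s) := Function.update v c newc with hv'
  have hv'c : v' c = newc := Function.update_self _ _ _
  have hv'ne : ∀ a, a ≠ c → v' a = v a := fun a ha => Function.update_of_ne ha _ _
  have hnewcU : newc ∈ U := by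
    rw [hnewc]; split_ifs
    · exact hmemU a₀ ha₀
    · exact U.smul_mem _ huU
  have hnewcnorm : ‖newc‖ = 1 := by
    rw [hnewc]; split_ifs with h0
    · exact hnorm a₀
    · have htpos : 0 < t := by
        rw [htdef]; exact norm_pos_iff.mpr h0
      rw [norm_smul, norm_inv]
      rw [Complex.norm_real, Real.norm_eq_abs, abs_of_nonneg ht0, ← htdef]
      exact inv_mul_cancel₀ (ne_of_gt htpos)
  set P' : Matrix (Fin n) (Fin n) ℂ := gram v' with hP'def
  have hP'app : ∀ a b, P' a b = ⟪v' a, v' b⟫ := fun a b => rfl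
  have hP'corr : IsCorrMat P' := by
    refine ⟨gram_posSemidef_s19 v', fun a => ?_⟩
    rw [hP'app, inner_self_eq_norm_sq_to_K]
    by_cases ha : a = c
    · subst ha; rw [hv'c, hnewcnorm]; norm_num
    · rw [hv'ne a ha, hnorm a]; norm_num
  have key : ∀ a, a ≠ c → (⟪v a, v c⟫ : ℂ) = ⟪v' a, v' c⟫ * (t : ℂ) := by
    intro a ha
    rw [hinner a ha, hv'ne a ha, hv'c, hnewc]
    split_ifs with h0
    · have ht' : (t : ℝ) = 0 := by rw [htdef, h0, norm_zero]
      rw [h0, ht']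
      simp
    · have htpos : 0 < t := by rw [htdef]; exact norm_pos_iff.mpr h0
      have htne : (t : ℂ) ≠ 0 := by
        simpa using (ne_of_gt htpos)
      rw [inner_smul_right]
      field_simp
  obtain ⟨Q, hQpsd, hQrank, hQent⟩ := exists_Q c t ht0 ht1
  have hQcorr : IsCorrMat Q := by
    refine ⟨hQpsd, fun a => ?_⟩
    rw [hQent]
    by_cases ha : a = c <;> simp [ha]
  have hPQ : ∀ a b, P a b = P' a b * Q a b := by
    intro a b
    rw [hgen a b, hQent a b]
    by_cases ha : a = c <;> by_cases hb : b = c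
    · rw [ha, hb]
      simp only [if_pos rfl, mul_one]
      rw [inner_self_eq_norm_sq_to_K, hvc1, hP'corr.2 c]
      norm_num
    · rw [ha]
      simp only [if_pos rfl, if_neg hb]
      rw [← inner_conj_symm (v c) (v b), key b hb, map_mul, inner_conj_symm,
        Complex.conj_ofReal, hP'app]
      simp
    · rw [hb]
      simp only [if_neg ha, if_pos rfl]
      rw [key a ha, hP'app]
      simp
    · simp only [if_neg ha, if_neg hb, mul_one]
      rw [hP'app, hv'ne a ha, hv'ne b hb]
  have hP'nd : ¬ IsDecomposable r P' := fun hd =>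
    hPd (hd.schur hQcorr (hQrank.trans hr2) hPQ)
  have hlt : Submodule.span ℂ (Set.range v') < Submodule.span ℂ (Set.range v) := by
    have h1 : Submodule.span ℂ (Set.range v') ≤ U := by
      rw [Submodule.span_le]; rintro x ⟨a, rfl⟩
      by_cases ha : a = c
      · subst ha; rw [hv'c]; exact hnewcU
      · rw [hv'ne a ha]; exact hmemU a ha
    have h2 : U ≤ Submodule.span ℂ (Set.range v) := by
      rw [hUdef, Submodule.span_le]; rintro x ⟨a, ha, rfl⟩
      exact Submodule.subset_span ⟨a, rfl⟩
    refine lt_of_le_of_lt h1 (lt_of_le_of_ne h2 fun hEq => hc ?_)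
    rw [hEq]
    exact Submodule.subset_span ⟨c, rfl⟩
  have hranklt : P'.rank < P.rank := by
    have e1 : P'.rank = Module.finrank ℂ (Submodule.span ℂ (Set.range v')) := gram_rank_s19 v'
    have e2 : P.rank = Module.finrank ℂ (Submodule.span ℂ (Set.range v)) := by
      rw [hPgram]; exact gram_rank_s19 v
    rw [e1, e2]
    exact Submodule.finrank_lt_finrank_of_lt hlt
  have hge : sInf S ≤ P'.rank := Nat.sInf_le ⟨P', hP'corr, hP'nd, rfl⟩
  omega
end
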